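/- arXiv:2006.06365 — 4 statements merged into one kernel-verified Lean document; each statement's English description precedes it below -/
import Mathlib

section
/- Let G : ℝⁿ × Ω → ℝ be a random convex function such that for a.e. ω, G(·,ω) is differentiable with ν-Lipschitz gradient (w.r.t. a norm ‖·‖ with dual ‖·‖_*), and let g(x) = E[G(x,ω)] be differentiable with E[∇G(x,ω)] = ∇g(x). Denote ζ(x,ω) = ∇G(x,ω) - ∇g(x), and let x_* ∈ ℝⁿ, ς_*² = E[‖ζ(x_*,ω)‖_*²]. Then for every x: E[‖ζ(x,ω)‖_*²] ≤ 16ν·[g(x) - g(x_*) - ⟨∇g(x_*), x - x_*⟩] + 2ς_*². -/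
open MeasureTheory

section Aux

variable {E : Type*} [NormedAddCommGroup E] [NormedSpace ℝ E]

private lemma hasDerivAt_line {f : E → ℝ} {Df : E → E →L[ℝ] ℝ}
    (hderiv : ∀ x, HasFDerivAt f (Df x) x) (p d : E) (t : ℝ) :
    HasDerivAt (fun s : ℝ => f (p + s • d)) (Df (p + t • d) d) t := by
  have h1 : HasDerivAt (fun s : ℝ => p + s • d) d t := by
    simpa using ((hasDerivAt_id t).smul_const d).const_add p
  exact (hderiv (p + t • d)).comp_hasDerivAt t h1

private lemma grad_ineq {f : E → ℝ} {Df : E → E →L[ℝ] ℝ}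
    (hconv : ConvexOn ℝ Set.univ f) (hderiv : ∀ x, HasFDerivAt f (Df x) x)
    (x y : E) : f y + Df y (x - y) ≤ f x := by
  have hφconv : ConvexOn ℝ Set.univ (fun t : ℝ => f (y + t • (x - y))) := by
    have h := hconv.comp_affineMap (AffineMap.lineMap y x : ℝ →ᵃ[ℝ] E)
    simpa [Function.comp_def, AffineMap.lineMap_apply, add_comm] using h
  have hd : HasDerivAt (fun t : ℝ => f (y + t • (x - y))) (Df y (x - y)) 0 := by
    simpa using hasDerivAt_line hderiv y (x - y) 0
  have h := hφconv.le_slope_of_hasDerivAt (Set.mem_univ 0) (Set.mem_univ 1) one_pos hd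
  have h2 : slope (fun t : ℝ => f (y + t • (x - y))) 0 1 = f x - f y := by
    simp [slope_def_field]
  rw [h2] at h
  linarith

private lemma descent {f : E → ℝ} {Df : E → E →L[ℝ] ℝ} {ν : ℝ}
    (hderiv : ∀ x, HasFDerivAt f (Df x) x)
    (hlip : ∀ x y, ‖Df x - Df y‖ ≤ ν * ‖x - y‖) (u v : E) :
    f v ≤ f u + Df u (v - u) + ν / 2 * ‖v - u‖ ^ 2 := by
  set d := v - u with hd
  set χ : ℝ → ℝ := fun t => f (u + t • d) - t * Df u d - ν / 2 * t ^ 2 * ‖d‖ ^ 2 with hχ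
  have hχd : ∀ t : ℝ, HasDerivAt χ
      (Df (u + t • d) d - Df u d - ν * t * ‖d‖ ^ 2) t := by
    intro t
    have h1 := hasDerivAt_line hderiv u d t
    have h2 : HasDerivAt (fun t : ℝ => t * Df u d) (Df u d) t := by
      simpa using (hasDerivAt_id t).mul_const (Df u d)
    have hp : HasDerivAt (fun s : ℝ => s ^ 2) (2 * t) t := by
      simpa using hasDerivAt_pow 2 t
    have h3 := (hp.const_mul (ν / 2)).mul_const (‖d‖ ^ 2)
    have h := (h1.sub h2).sub h3
    have he : ν / 2 * (2 * t) * ‖d‖ ^ 2 = ν * t * ‖d‖ ^ 2 := by ring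
    rw [he] at h
    exact h
  have hdiff : Differentiable ℝ χ := fun t => (hχd t).differentiableAt
  have hanti : AntitoneOn χ (Set.Icc (0:ℝ) 1) := by
    apply antitoneOn_of_deriv_nonpos (convex_Icc (0:ℝ) 1)
      hdiff.continuous.continuousOn hdiff.differentiableOn
    intro t ht
    rw [interior_Icc] at ht
    rw [(hχd t).deriv]
    have hb : Df (u + t • d) d - Df u d ≤ ν * t * ‖d‖ ^ 2 := by
      have h0 : Df (u + t • d) d - Df u d = (Df (u + t • d) - Df u) d := by simp
      rw [h0]
      calc (Df (u + t • d) - Df u) d ≤ ‖(Df (u + t • d) - Df u) d‖ := le_abs_self _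
        _ ≤ ‖Df (u + t • d) - Df u‖ * ‖d‖ := (Df (u + t • d) - Df u).le_opNorm d
        _ ≤ ν * ‖(u + t • d) - u‖ * ‖d‖ := by
            exact mul_le_mul_of_nonneg_right (hlip _ _) (norm_nonneg d)
        _ = ν * t * ‖d‖ ^ 2 := by
            have : ‖(u + t • d) - u‖ = t * ‖d‖ := by
              rw [add_sub_cancel_left, norm_smul, Real.norm_eq_abs, abs_of_pos ht.1]
            rw [this]; ring
    linarith
  have key : χ 1 ≤ χ 0 :=
    hanti (Set.mem_Icc.2 ⟨le_refl 0, zero_le_one⟩) (Set.mem_Icc.2 ⟨zero_le_one, le_refl 1⟩)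
      zero_le_one
  have h0 : χ 0 = f u := by simp [hχ]
  have h1 : χ 1 = f v - Df u d - ν / 2 * ‖d‖ ^ 2 := by
    simp [hχ, hd]
  rw [h0, h1] at key
  linarith

private lemma coco {f : E → ℝ} {Df : E → E →L[ℝ] ℝ} {ν : ℝ} (hν : 0 ≤ ν)
    (hconv : ConvexOn ℝ Set.univ f) (hderiv : ∀ x, HasFDerivAt f (Df x) x)
    (hlip : ∀ x y, ‖Df x - Df y‖ ≤ ν * ‖x - y‖) (x y : E) :
    ‖Df x - Df y‖ ^ 2 ≤ 2 * ν * (f x - f y - Df y (x - y)) := by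
  have hΔ0 : 0 ≤ f x - f y - Df y (x - y) := by
    have := grad_ineq hconv hderiv x y; linarith
  have hM : 0 ≤ 2 * ν * (f x - f y - Df y (x - y)) := by positivity
  have key : ∀ c : ℝ, 0 ≤ c → c < ‖Df x - Df y‖ →
      c ^ 2 ≤ 2 * ν * (f x - f y - Df y (x - y)) := by
    intro c hc0 hc
    have hν' : 0 < ν := by
      rcases hν.lt_or_eq with h | h
      · exact h
      · exfalso
        have hl := hlip x y
        rw [← h, zero_mul] at hl
        have : ‖Df x - Df y‖ = 0 := le_antisymm hl (norm_nonneg _)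
        rw [this] at hc
        linarith
    obtain ⟨u, hu1, hu2⟩ := (Df x - Df y).exists_lt_apply_of_lt_opNorm hc
    obtain ⟨w, hw1, hw2⟩ : ∃ w : E, ‖w‖ ≤ 1 ∧ (Df x - Df y) w ≤ -c := by
      rcases le_or_gt ((Df x - Df y) u) 0 with h | h
      · refine ⟨u, hu1.le, ?_⟩
        rw [Real.norm_eq_abs, abs_of_nonpos h] at hu2
        linarith
      · refine ⟨-u, by simpa using hu1.le, ?_⟩
        rw [map_neg]
        rw [Real.norm_eq_abs, abs_of_pos h] at hu2
        linarith
    set t := c / ν with ht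
    have ht0 : 0 ≤ t := div_nonneg hc0 hν'.le
    have hct : c = t * ν := by
      rw [ht]; field_simp
    have hmin : f y - Df y y ≤ f (x + t • w) - Df y (x + t • w) := by
      have := grad_ineq hconv hderiv (x + t • w) y
      rw [map_sub] at this
      linarith
    have hdesc : f (x + t • w) - Df y (x + t • w)
        ≤ (f x - Df y x) + (Df x - Df y) (t • w) + ν / 2 * ‖t • w‖ ^ 2 := by
      have hd' : ∀ z, HasFDerivAt (fun z => f z - Df y z) (Df z - Df y) z :=
        fun z => (hderiv z).sub (Df y).hasFDerivAt
      have hl' : ∀ z z' : E, ‖(Df z - Df y) - (Df z' - Df y)‖ ≤ ν * ‖z - z'‖ := by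
        intro z z'
        simpa [sub_sub_sub_cancel_right] using hlip z z'
      have := descent hd' hl' x (x + t • w)
      simpa using this
    have hlw : (Df x - Df y) (t • w) ≤ -(t * c) := by
      rw [ContinuousLinearMap.map_smul, smul_eq_mul]
      have := mul_le_mul_of_nonneg_left hw2 ht0
      linarith
    have hnw : ν / 2 * ‖t • w‖ ^ 2 ≤ ν / 2 * t ^ 2 := by
      have h1 : ‖t • w‖ ≤ t := by
        rw [norm_smul, Real.norm_eq_abs, abs_of_nonneg ht0]
        nlinarith [norm_nonneg w]
      have h2 : ‖t • w‖ ^ 2 ≤ t ^ 2 := by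
        nlinarith [norm_nonneg (t • w)]
      nlinarith
    have hfin : f y - Df y y ≤ f x - Df y x - t * c + ν / 2 * t ^ 2 := by
      have := hmin.trans hdesc
      linarith
    rw [map_sub]
    nlinarith [hfin, hν', hct, sq_nonneg t]
  by_contra hcon
  push_neg at hcon
  set M := 2 * ν * (f x - f y - Df y (x - y)) with hMdef
  set c := Real.sqrt ((M + ‖Df x - Df y‖ ^ 2) / 2) with hcdef
  have hc0 : 0 ≤ c := Real.sqrt_nonneg _
  have hcsq : c ^ 2 = (M + ‖Df x - Df y‖ ^ 2) / 2 := by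
    rw [hcdef, Real.sq_sqrt]
    nlinarith [sq_nonneg ‖Df x - Df y‖]
  have hclt : c < ‖Df x - Df y‖ := by
    apply lt_of_pow_lt_pow_left₀ 2 (norm_nonneg _)
    rw [hcsq]; linarith
  have := key c hc0 hclt
  rw [hcsq] at this
  linarith

end Aux

/-- If the stochastic gradient `∇G(·,ω)` is a.s. `ν`-Lipschitz and `G(·,ω)` is a.s. convex,
then, with `ζ(x,ω) = ∇G(x,ω) - ∇g(x)` and `ς_*² = E[‖ζ(x_*,ω)‖_*²]`, for every `x`:
`E[‖ζ(x,ω)‖_*²] ≤ 16 ν (g x - g x_* - ⟨∇g(x_*), x - x_*⟩) + 2 ς_*²`. -/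
theorem stmt4 {E : Type*} [NormedAddCommGroup E] [NormedSpace ℝ E]
    {Ω : Type*} [MeasurableSpace Ω] (μ : Measure Ω) [IsProbabilityMeasure μ]
    (G : Ω → E → ℝ) (DG : Ω → E → (E →L[ℝ] ℝ))
    (g : E → ℝ) (Dg : E → (E →L[ℝ] ℝ)) (ν : ℝ) (hν : 0 ≤ ν)
    (hconv : ∀ᵐ ω ∂μ, ConvexOn ℝ Set.univ (G ω))
    (hderiv : ∀ᵐ ω ∂μ, ∀ x : E, HasFDerivAt (G ω) (DG ω x) x)
    (hLip : ∀ᵐ ω ∂μ, ∀ x y : E, ‖DG ω x - DG ω y‖ ≤ ν * ‖x - y‖)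
    (hg : ∀ x : E, g x = ∫ ω, G ω x ∂μ)
    (hGint : ∀ x : E, Integrable (fun ω => G ω x) μ)
    (hDGint : ∀ x : E, Integrable (fun ω => DG ω x) μ)
    (hunbiased : ∀ x : E, ∫ ω, DG ω x ∂μ = Dg x)
    (hζint : ∀ x : E, Integrable (fun ω => ‖DG ω x - Dg x‖ ^ 2) μ)
    (xstar : E) :
    ∀ x : E, ∫ ω, ‖DG ω x - Dg x‖ ^ 2 ∂μ ≤
      16 * ν * (g x - g xstar - Dg xstar (x - xstar)) +
        2 * ∫ ω, ‖DG ω xstar - Dg xstar‖ ^ 2 ∂μ := by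
  intro x
  set c : ℝ := ‖Dg x - Dg xstar‖ with hcdef
  set A : Ω → ℝ := fun ω => ‖DG ω x - DG ω xstar‖ with hAdef
  set Δ : ℝ := g x - g xstar - Dg xstar (x - xstar) with hΔdef
  -- measurability of A
  have hA_meas : AEStronglyMeasurable A μ :=
    ((hDGint x).aestronglyMeasurable.sub (hDGint xstar).aestronglyMeasurable).norm
  have hA_bd : ∀ᵐ ω ∂μ, A ω ≤ ν * ‖x - xstar‖ := by
    filter_upwards [hLip] with ω h
    exact h x xstar
  have hA_int : Integrable A μ := by
    refine Integrable.mono' (integrable_const (ν * ‖x - xstar‖)) hA_meas ?_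
    filter_upwards [hA_bd] with ω h
    rwa [Real.norm_eq_abs, abs_of_nonneg (norm_nonneg _)]
  have hA2_int : Integrable (fun ω => A ω ^ 2) μ := by
    refine Integrable.mono' (integrable_const ((ν * ‖x - xstar‖) ^ 2)) (hA_meas.pow 2) ?_
    filter_upwards [hA_bd] with ω h
    rw [Real.norm_eq_abs, abs_of_nonneg (sq_nonneg _)]
    exact pow_le_pow_left₀ (norm_nonneg _) h 2
  -- the integrated Bregman divergence
  have hI1 : Integrable (fun ω => G ω x - G ω xstar) μ := (hGint x).sub (hGint xstar)
  have hI2 : Integrable (fun ω => DG ω xstar (x - xstar)) μ :=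
    (hDGint xstar).apply_continuousLinearMap _
  have hΔω_int : Integrable (fun ω => G ω x - G ω xstar - DG ω xstar (x - xstar)) μ :=
    hI1.sub hI2
  have hΔω_eq : ∫ ω, (G ω x - G ω xstar - DG ω xstar (x - xstar)) ∂μ = Δ := by
    rw [integral_sub hI1 hI2,
      integral_sub (hGint x) (hGint xstar),
      ← ContinuousLinearMap.integral_apply (hDGint xstar) (x - xstar),
      hunbiased xstar, hΔdef, hg x, hg xstar]
  -- cocoercivity pointwise a.e.
  have hcoco : ∀ᵐ ω ∂μ, A ω ^ 2 ≤
      2 * ν * (G ω x - G ω xstar - DG ω xstar (x - xstar)) := by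
    filter_upwards [hconv, hderiv, hLip] with ω h1 h2 h3
    exact coco hν h1 h2 h3 x xstar
  have hA2_le : ∫ ω, A ω ^ 2 ∂μ ≤ 2 * ν * Δ := by
    calc ∫ ω, A ω ^ 2 ∂μ
        ≤ ∫ ω, 2 * ν * (G ω x - G ω xstar - DG ω xstar (x - xstar)) ∂μ :=
          integral_mono_ae hA2_int (hΔω_int.const_mul _) hcoco
      _ = 2 * ν * Δ := by rw [integral_const_mul, hΔω_eq]
  -- `c ≤ ∫ A` and Cauchy-Schwarz
  have hm : c ≤ ∫ ω, A ω ∂μ := by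
    have h1 : Dg x - Dg xstar = ∫ ω, (DG ω x - DG ω xstar) ∂μ := by
      rw [integral_sub (hDGint x) (hDGint xstar), hunbiased x, hunbiased xstar]
    rw [hcdef, h1]
    exact norm_integral_le_integral_norm _
  have hm0 : 0 ≤ ∫ ω, A ω ∂μ := integral_nonneg fun ω => norm_nonneg _
  have hjensen : (∫ ω, A ω ∂μ) ^ 2 ≤ ∫ ω, A ω ^ 2 ∂μ := by
    set m : ℝ := ∫ ω, A ω ∂μ with hmdef
    have hvar : 0 ≤ ∫ ω, (A ω - m) ^ 2 ∂μ := integral_nonneg fun ω => sq_nonneg _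
    have hexp : ∫ ω, (A ω - m) ^ 2 ∂μ = (∫ ω, A ω ^ 2 ∂μ) - m ^ 2 := by
      have heq : ∀ ω, (A ω - m) ^ 2 = (A ω ^ 2 - 2 * m * A ω) + m ^ 2 := by
        intro ω; ring
      have hI3 : Integrable (fun ω => A ω ^ 2 - 2 * m * A ω) μ :=
        hA2_int.sub (hA_int.const_mul (2 * m))
      simp_rw [heq]
      rw [integral_add hI3 (integrable_const _),
        integral_sub hA2_int (hA_int.const_mul (2 * m)), integral_const_mul, integral_const]
      simp only [measure_univ, ENNReal.toReal_one, probReal_univ, smul_eq_mul, one_mul, ← hmdef]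
      ring
    linarith
  have hc2 : c ^ 2 ≤ 2 * ν * Δ := by
    have h1 : c ^ 2 ≤ (∫ ω, A ω ∂μ) ^ 2 := pow_le_pow_left₀ (norm_nonneg _) hm 2
    linarith
  -- pointwise decomposition bound
  have hptwise : ∀ᵐ ω ∂μ, ‖DG ω x - Dg x‖ ^ 2 ≤
      4 * A ω ^ 2 + 2 * ‖DG ω xstar - Dg xstar‖ ^ 2 + 4 * c ^ 2 := by
    refine Filter.Eventually.of_forall fun ω => ?_
    have hsplit : ‖DG ω x - Dg x‖ ≤ A ω + ‖DG ω xstar - Dg xstar‖ + c := by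
      have h1 : DG ω x - Dg x =
          (DG ω x - DG ω xstar) + (DG ω xstar - Dg xstar) + (Dg xstar - Dg x) := by
        abel
      rw [h1]
      calc ‖(DG ω x - DG ω xstar) + (DG ω xstar - Dg xstar) + (Dg xstar - Dg x)‖
          ≤ ‖(DG ω x - DG ω xstar) + (DG ω xstar - Dg xstar)‖ + ‖Dg xstar - Dg x‖ :=
            norm_add_le _ _
        _ ≤ ‖DG ω x - DG ω xstar‖ + ‖DG ω xstar - Dg xstar‖ + ‖Dg xstar - Dg x‖ := by
            gcongr; exact norm_add_le _ _
        _ = A ω + ‖DG ω xstar - Dg xstar‖ + c := by rw [norm_sub_rev (Dg xstar) (Dg x)]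
    nlinarith [norm_nonneg (DG ω x - Dg x), norm_nonneg (DG ω xstar - Dg xstar),
      norm_nonneg (DG ω x - DG ω xstar), norm_nonneg (Dg x - Dg xstar),
      sq_nonneg (A ω + c - ‖DG ω xstar - Dg xstar‖), sq_nonneg (A ω - c)]
  -- integrate
  have hJ1 : Integrable (fun ω => 4 * A ω ^ 2) μ := hA2_int.const_mul 4
  have hJ2 : Integrable (fun ω => 2 * ‖DG ω xstar - Dg xstar‖ ^ 2) μ :=
    (hζint xstar).const_mul 2
  have hJ12 : Integrable (fun ω => 4 * A ω ^ 2 + 2 * ‖DG ω xstar - Dg xstar‖ ^ 2) μ :=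
    hJ1.add hJ2
  have hRHS_int : Integrable
      (fun ω => 4 * A ω ^ 2 + 2 * ‖DG ω xstar - Dg xstar‖ ^ 2 + 4 * c ^ 2) μ :=
    hJ12.add (integrable_const _)
  have hmain : ∫ ω, ‖DG ω x - Dg x‖ ^ 2 ∂μ ≤
      4 * (∫ ω, A ω ^ 2 ∂μ) + 2 * (∫ ω, ‖DG ω xstar - Dg xstar‖ ^ 2 ∂μ) + 4 * c ^ 2 := by
    calc ∫ ω, ‖DG ω x - Dg x‖ ^ 2 ∂μ
        ≤ ∫ ω, (4 * A ω ^ 2 + 2 * ‖DG ω xstar - Dg xstar‖ ^ 2 + 4 * c ^ 2) ∂μ :=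
          integral_mono_ae (hζint x) hRHS_int hptwise
      _ = 4 * (∫ ω, A ω ^ 2 ∂μ) + 2 * (∫ ω, ‖DG ω xstar - Dg xstar‖ ^ 2 ∂μ) + 4 * c ^ 2 := by
          rw [integral_add hJ12 (integrable_const _),
            integral_add hJ1 hJ2,
            integral_const_mul, integral_const_mul, integral_const]
          simp
  linarith
end

section
/- Let φ ∈ ℝⁿ be a random vector with E[φφᵀ] = I and ‖φ‖_∞ ≤ r almost surely, and let ξ be a real random variable independent of φ with E[ξ]=0, E[ξ²] ≤ 1. Fix x_* ∈ ℝⁿ and define ζ(x) = [φφᵀ - I](x - x_*) - σξφ. Then E[‖ζ(x)‖_∞²] ≤ 4(r² + 1)‖x - x_*‖₂² + 2σ²r² for all x ∈ ℝⁿ. -/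
open MeasureTheory ProbabilityTheory

/-- The `ℓ∞`-norm (max-norm) of a vector of `ℝⁿ`. -/
noncomputable def linf {n : ℕ} (z : Fin n → ℝ) : ℝ := ⨆ i, |z i|

lemma le_linf {n : ℕ} (z : Fin n → ℝ) (i : Fin n) : |z i| ≤ linf z :=
  le_ciSup (f := fun i => |z i|) ((Set.finite_range _).bddAbove) i

lemma linf_le {n : ℕ} [Nonempty (Fin n)] {z : Fin n → ℝ} {c : ℝ} (h : ∀ i, |z i| ≤ c) :
    linf z ≤ c := ciSup_le h

lemma linf_nonneg {n : ℕ} [Nonempty (Fin n)] (z : Fin n → ℝ) : 0 ≤ linf z :=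
  le_trans (abs_nonneg _) (le_linf z (Classical.arbitrary _))

set_option maxHeartbeats 1000000 in
/-- For the linear regression oracle with `E[φφᵀ] = I`, `‖φ‖_∞ ≤ r` a.s., and noise `ξ`
independent of `φ` with zero mean and variance at most one, the oracle error
`ζ(x) = [φφᵀ - I](x - x_*) - σξφ` satisfies
`E[‖ζ(x)‖_∞²] ≤ 4 (r² + 1) ‖x - x_*‖₂² + 2 σ² r²`. -/
theorem stmt5 {n : ℕ} {Ω : Type*} [MeasurableSpace Ω] (μ : Measure Ω)
    [IsProbabilityMeasure μ]
    (φ : Ω → EuclideanSpace ℝ (Fin n)) (ξ : Ω → ℝ) (r σ : ℝ) (hσ : 0 ≤ σ)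
    (hφmeas : Measurable φ) (hξmeas : Measurable ξ)
    (hcov : ∀ i j, ∫ ω, φ ω i * φ ω j ∂μ = if i = j then (1 : ℝ) else 0)
    (hbdd : ∀ᵐ ω ∂μ, ∀ i, |φ ω i| ≤ r)
    (hindep : IndepFun φ ξ μ)
    (hmean : ∫ ω, ξ ω ∂μ = 0) (hvar : ∫ ω, (ξ ω) ^ 2 ∂μ ≤ 1)
    (xstar x : EuclideanSpace ℝ (Fin n))
    (hint : Integrable (fun ω =>
      (linf (fun i => (∑ j, (φ ω i * φ ω j - if i = j then (1 : ℝ) else 0) * (x j - xstar j))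
        - σ * ξ ω * φ ω i)) ^ 2) μ) :
    ∫ ω, (linf (fun i =>
        (∑ j, (φ ω i * φ ω j - if i = j then (1 : ℝ) else 0) * (x j - xstar j))
          - σ * ξ ω * φ ω i)) ^ 2 ∂μ
      ≤ 4 * (r ^ 2 + 1) * ‖x - xstar‖ ^ 2 + 2 * σ ^ 2 * r ^ 2 := by
  rcases Nat.eq_zero_or_pos n with hn | hn
  · subst hn
    have h0 : ∀ ω : Ω, (linf (fun i =>
        (∑ j, (φ ω i * φ ω j - if i = j then (1 : ℝ) else 0) * (x j - xstar j))
          - σ * ξ ω * φ ω i)) ^ 2 = 0 := by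
      intro ω
      rw [linf, Real.iSup_of_isEmpty]
      norm_num
    rw [integral_congr_ae (Filter.Eventually.of_forall h0), integral_zero]
    positivity
  haveI : Nonempty (Fin n) := ⟨⟨0, hn⟩⟩
  haveI : (ae μ).NeBot := ae_neBot.mpr (IsProbabilityMeasure.ne_zero μ)
  obtain ⟨ω₀, hω₀⟩ := hbdd.exists
  have hr : 0 ≤ r := le_trans (abs_nonneg _) (hω₀ ⟨0, hn⟩)
  set F : Ω → ℝ := fun ω =>
      (linf (fun i => (∑ j, (φ ω i * φ ω j - if i = j then (1 : ℝ) else 0) * (x j - xstar j))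
        - σ * ξ ω * φ ω i)) ^ 2 with hFdef
  set v : Fin n → ℝ := fun j => x j - xstar j with hv
  set N : ℝ := ‖x - xstar‖ with hN
  have hN0 : 0 ≤ N := norm_nonneg _
  have hNsq : N ^ 2 = ∑ j, v j ^ 2 := by
    rw [hN, EuclideanSpace.norm_eq, Real.sq_sqrt (by positivity)]
    simp [hv, sq_abs]
  have hvle : ∀ j, |v j| ≤ N := by
    intro j
    have h1 : v j ^ 2 ≤ N ^ 2 := by
      rw [hNsq]
      exact Finset.single_le_sum (f := fun j => v j ^ 2) (fun j _ => sq_nonneg _)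
        (Finset.mem_univ j)
    calc |v j| = Real.sqrt (v j ^ 2) := (Real.sqrt_sq_eq_abs _).symm
      _ ≤ Real.sqrt (N ^ 2) := Real.sqrt_le_sqrt h1
      _ = N := by rw [Real.sqrt_sq hN0]
  set S : Ω → ℝ := fun ω => ∑ j, φ ω j * v j with hS
  set B : ℝ := r * ∑ j, |v j| with hB
  have hB0 : 0 ≤ B := by
    apply mul_nonneg hr
    exact Finset.sum_nonneg fun j _ => abs_nonneg _
  have hφi : ∀ i, Measurable fun ω => φ ω i := fun i => (measurable_pi_apply i).comp ((WithLp.measurable_ofLp _ _).comp hφmeas)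
  have hSmeas : Measurable S := Finset.measurable_sum _ (fun j _ => (hφi j).mul_const _)
  set L : Ω → ℝ := fun ω => linf (φ ω) with hL
  have hLmeas : Measurable L := Measurable.iSup (fun i => (hφi i).abs)
  have hsum : ∀ ω i,
      (∑ j, (φ ω i * φ ω j - if i = j then (1 : ℝ) else 0) * (x j - xstar j))
        = φ ω i * S ω - v i := by
    intro ω i
    have h1 : ∀ j, (φ ω i * φ ω j - if i = j then (1 : ℝ) else 0) * (x j - xstar j)
        = φ ω i * (φ ω j * v j) - (if i = j then (1 : ℝ) else 0) * v j := by
      intro j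
      rcases eq_or_ne i j with h | h <;> simp [h, hv] <;> ring
    rw [Finset.sum_congr rfl fun j _ => h1 j, Finset.sum_sub_distrib, ← Finset.mul_sum]
    simp [Finset.sum_ite_eq, hS]
  have hW : ∀ ω, F ω = (linf (fun i => φ ω i * S ω - v i - σ * ξ ω * φ ω i)) ^ 2 := by
    intro ω
    rw [hFdef]
    simp only [hsum]
  have hae : ∀ᵐ ω ∂μ,
      F ω ≤ 4 * r ^ 2 * S ω ^ 2 + 4 * N ^ 2 + 2 * (σ ^ 2 * ξ ω ^ 2 * L ω ^ 2)
      ∧ σ ^ 2 * ξ ω ^ 2 * L ω ^ 2 ≤ 2 * (r * B + N) ^ 2 + 2 * F ω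
      ∧ |S ω| ≤ B ∧ 0 ≤ L ω ∧ L ω ≤ r := by
    filter_upwards [hbdd] with ω hω
    have hLr : L ω ≤ r := linf_le hω
    have hL0 : 0 ≤ L ω := linf_nonneg _
    have hphiL : ∀ i, |φ ω i| ≤ L ω := fun i => le_linf (φ ω) i
    have hSB : |S ω| ≤ B := by
      rw [hS, hB]
      calc |∑ j, φ ω j * v j| ≤ ∑ j, |φ ω j * v j| := Finset.abs_sum_le_sum_abs _ _
        _ = ∑ j, |φ ω j| * |v j| := by simp [abs_mul]
        _ ≤ ∑ j, r * |v j| :=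
            Finset.sum_le_sum fun j _ => mul_le_mul_of_nonneg_right (hω j) (abs_nonneg _)
        _ = r * ∑ j, |v j| := (Finset.mul_sum _ _ _).symm
    set T : ℝ := linf (fun i => φ ω i * S ω - v i - σ * ξ ω * φ ω i) with hT
    have hT0 : 0 ≤ T := linf_nonneg _
    have hterm : ∀ i, |φ ω i * S ω - v i| ≤ r * |S ω| + N := by
      intro i
      calc |φ ω i * S ω - v i| ≤ |φ ω i * S ω| + |v i| := abs_sub _ _
        _ = |φ ω i| * |S ω| + |v i| := by rw [abs_mul]
        _ ≤ r * |S ω| + N :=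
            add_le_add (mul_le_mul_of_nonneg_right (hω i) (abs_nonneg _)) (hvle i)
    have hTle : T ≤ (r * |S ω| + N) + σ * |ξ ω| * L ω := by
      rw [hT]
      apply linf_le
      intro i
      calc |φ ω i * S ω - v i - σ * ξ ω * φ ω i|
          ≤ |φ ω i * S ω - v i| + |σ * ξ ω * φ ω i| := abs_sub _ _
        _ ≤ (r * |S ω| + N) + σ * |ξ ω| * L ω := by
            apply add_le_add (hterm i)
            rw [abs_mul, abs_mul, abs_of_nonneg hσ]
            exact mul_le_mul_of_nonneg_left (hphiL i)
              (mul_nonneg hσ (abs_nonneg _))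
    have hnoise_le : σ * |ξ ω| * L ω ≤ (r * B + N) + T := by
      have h2 : σ * |ξ ω| * L ω = ⨆ i, σ * |ξ ω| * |φ ω i| :=
        Real.mul_iSup_of_nonneg (by positivity) _
      rw [h2]
      apply ciSup_le
      intro i
      have h3 : σ * |ξ ω| * |φ ω i| = |σ * ξ ω * φ ω i| := by
        rw [abs_mul, abs_mul, abs_of_nonneg hσ]
      have h4 : σ * ξ ω * φ ω i
          = (φ ω i * S ω - v i) - (φ ω i * S ω - v i - σ * ξ ω * φ ω i) := by ring
      rw [h3, h4]
      calc |(φ ω i * S ω - v i) - (φ ω i * S ω - v i - σ * ξ ω * φ ω i)|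
          ≤ |φ ω i * S ω - v i| + |φ ω i * S ω - v i - σ * ξ ω * φ ω i| := abs_sub _ _
        _ ≤ (r * B + N) + T := by
            apply add_le_add
            · exact le_trans (hterm i)
                (add_le_add_left (mul_le_mul_of_nonneg_left hSB hr) N)
            · rw [hT]; exact le_linf (fun i => φ ω i * S ω - v i - σ * ξ ω * φ ω i) i
    have hFW : F ω = T ^ 2 := hW ω
    refine ⟨?_, ?_, hSB, hL0, hLr⟩
    · rw [hFW]
      have e1 : T ^ 2 ≤ ((r * |S ω| + N) + σ * |ξ ω| * L ω) ^ 2 :=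
        pow_le_pow_left₀ hT0 hTle 2
      have e2 : ((r * |S ω| + N) + σ * |ξ ω| * L ω) ^ 2
          ≤ 2 * (r * |S ω| + N) ^ 2 + 2 * (σ * |ξ ω| * L ω) ^ 2 := by
        nlinarith [sq_nonneg (r * |S ω| + N - σ * |ξ ω| * L ω)]
      have e3 : (r * |S ω| + N) ^ 2 ≤ 2 * (r * |S ω|) ^ 2 + 2 * N ^ 2 := by
        nlinarith [sq_nonneg (r * |S ω| - N)]
      have e4 : (r * |S ω|) ^ 2 = r ^ 2 * S ω ^ 2 := by rw [mul_pow, sq_abs]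
      have e5 : (σ * |ξ ω| * L ω) ^ 2 = σ ^ 2 * ξ ω ^ 2 * L ω ^ 2 := by
        rw [mul_pow, mul_pow, sq_abs]
      linarith
    · rw [hFW]
      have e2 : (σ * |ξ ω| * L ω) ^ 2 ≤ ((r * B + N) + T) ^ 2 :=
        pow_le_pow_left₀ (by positivity) hnoise_le 2
      have e3 : ((r * B + N) + T) ^ 2 ≤ 2 * (r * B + N) ^ 2 + 2 * T ^ 2 := by
        nlinarith [sq_nonneg (r * B + N - T)]
      have e5 : (σ * |ξ ω| * L ω) ^ 2 = σ ^ 2 * ξ ω ^ 2 * L ω ^ 2 := by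
        rw [mul_pow, mul_pow, sq_abs]
      linarith
  -- Integrability facts
  have hSsq_int : Integrable (fun ω => S ω ^ 2) μ := by
    apply Integrable.mono' (integrable_const (B ^ 2))
      ((hSmeas.pow_const 2).aestronglyMeasurable)
    filter_upwards [hae] with ω h
    rw [Real.norm_eq_abs, abs_of_nonneg (sq_nonneg _), ← sq_abs]
    exact pow_le_pow_left₀ (abs_nonneg _) h.2.2.1 2
  have hGmeas : Measurable fun ω => σ ^ 2 * ξ ω ^ 2 * L ω ^ 2 :=
    ((hξmeas.pow_const 2).const_mul _).mul (hLmeas.pow_const 2)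
  have hGint : Integrable (fun ω => σ ^ 2 * ξ ω ^ 2 * L ω ^ 2) μ := by
    apply Integrable.mono' ((integrable_const (2 * (r * B + N) ^ 2)).add (hint.const_mul 2))
      hGmeas.aestronglyMeasurable
    filter_upwards [hae] with ω h
    rw [Real.norm_eq_abs, abs_of_nonneg (by positivity)]
    exact h.2.1
  -- Step 1: bound the integral by the integrable majorant
  have step1 : ∫ ω, F ω ∂μ
      ≤ ∫ ω, (4 * r ^ 2 * S ω ^ 2 + 4 * N ^ 2 + 2 * (σ ^ 2 * ξ ω ^ 2 * L ω ^ 2)) ∂μ := by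
    apply integral_mono_ae hint
      (((hSsq_int.const_mul _).add (integrable_const _)).add (hGint.const_mul 2))
    filter_upwards [hae] with ω h
    exact h.1
  have step2 : ∫ ω, (4 * r ^ 2 * S ω ^ 2 + 4 * N ^ 2 + 2 * (σ ^ 2 * ξ ω ^ 2 * L ω ^ 2)) ∂μ
      = 4 * r ^ 2 * ∫ ω, S ω ^ 2 ∂μ + 4 * N ^ 2
        + 2 * ∫ ω, σ ^ 2 * ξ ω ^ 2 * L ω ^ 2 ∂μ := by
    have i1 : Integrable (fun ω => 4 * r ^ 2 * S ω ^ 2) μ := hSsq_int.const_mul _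
    have i2 : Integrable (fun ω => 4 * r ^ 2 * S ω ^ 2 + 4 * N ^ 2) μ :=
      i1.add (integrable_const _)
    have i3 : Integrable (fun ω => 2 * (σ ^ 2 * ξ ω ^ 2 * L ω ^ 2)) μ := hGint.const_mul 2
    rw [integral_add i2 i3, integral_add i1 (integrable_const _),
      integral_const_mul, integral_const_mul, integral_const]
    simp [integral_const_mul]
  -- Step 3: second moment of S
  have hcross_int : ∀ j k : Fin n, Integrable (fun ω => φ ω j * v j * (φ ω k * v k)) μ := by
    intro j k
    apply Integrable.mono' (integrable_const (r * |v j| * (r * |v k|)))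
      (((hφi j).mul_const _).mul ((hφi k).mul_const _)).aestronglyMeasurable
    filter_upwards [hbdd] with ω h
    simp only [Real.norm_eq_abs, Pi.mul_apply, abs_mul]
    have h1 : |φ ω j| * |v j| ≤ r * |v j| :=
      mul_le_mul_of_nonneg_right (h j) (abs_nonneg _)
    have h2 : |φ ω k| * |v k| ≤ r * |v k| :=
      mul_le_mul_of_nonneg_right (h k) (abs_nonneg _)
    exact mul_le_mul h1 h2 (by positivity) (by positivity)
  have hSint_eq : ∫ ω, S ω ^ 2 ∂μ = N ^ 2 := by
    have hexp : ∀ ω, S ω ^ 2 = ∑ j, ∑ k, φ ω j * v j * (φ ω k * v k) := by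
      intro ω
      rw [sq]
      exact Finset.sum_mul_sum _ _ _ _
    simp_rw [hexp]
    rw [integral_finset_sum _ (fun j _ => integrable_finset_sum _ (fun k _ => hcross_int j k))]
    have h1 : ∀ j : Fin n, ∫ ω, ∑ k, φ ω j * v j * (φ ω k * v k) ∂μ
        = ∑ k, ∫ ω, φ ω j * v j * (φ ω k * v k) ∂μ :=
      fun j => integral_finset_sum _ (fun k _ => hcross_int j k)
    simp_rw [h1]
    have h2 : ∀ j k : Fin n, ∫ ω, φ ω j * v j * (φ ω k * v k) ∂μ
        = v j * v k * (if j = k then (1 : ℝ) else 0) := by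
      intro j k
      have h3 : (fun ω => φ ω j * v j * (φ ω k * v k))
          = fun ω => v j * v k * (φ ω j * φ ω k) := by
        funext ω; ring
      rw [h3, integral_const_mul, hcov]
    simp_rw [h2]
    rw [hNsq]
    apply Finset.sum_congr rfl
    intro j _
    simp [Finset.sum_ite_eq, mul_ite, sq]
  -- Step 4: noise term via independence
  have hnoise : ∫ ω, σ ^ 2 * ξ ω ^ 2 * L ω ^ 2 ∂μ ≤ σ ^ 2 * r ^ 2 := by
    set g : Ω → ℝ := fun ω => σ ^ 2 * ξ ω ^ 2 with hg
    set q : Ω → ℝ := fun ω => L ω ^ 2 with hq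
    have hqmeas : Measurable q := hLmeas.pow_const 2
    have hgmeas : Measurable g := (hξmeas.pow_const 2).const_mul _
    have hindep2 : IndepFun (fun ω => ENNReal.ofReal (g ω)) (fun ω => ENNReal.ofReal (q ω)) μ := by
      have h1 : Measurable fun t : ℝ => ENNReal.ofReal (σ ^ 2 * t ^ 2) :=
        ENNReal.measurable_ofReal.comp ((measurable_id.pow_const 2).const_mul _)
      have h2 : Measurable fun z : EuclideanSpace ℝ (Fin n) =>
          ENNReal.ofReal ((⨆ i, |z i|) ^ 2) :=
        ENNReal.measurable_ofReal.comp
          ((Measurable.iSup (fun i => ((measurable_pi_apply i).comp (WithLp.measurable_ofLp _ _)).abs)).pow_const 2)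
      exact hindep.symm.comp h1 h2
    have hmul : ∫⁻ ω, ENNReal.ofReal (g ω * q ω) ∂μ
        = (∫⁻ ω, ENNReal.ofReal (g ω) ∂μ) * ∫⁻ ω, ENNReal.ofReal (q ω) ∂μ := by
      rw [← lintegral_mul_eq_lintegral_mul_lintegral_of_indepFun
        hgmeas.ennreal_ofReal hqmeas.ennreal_ofReal hindep2]
      refine lintegral_congr fun ω => ?_
      simp only [Pi.mul_apply]
      exact ENNReal.ofReal_mul (mul_nonneg (sq_nonneg σ) (sq_nonneg (ξ ω)))
    have hqle : ∫⁻ ω, ENNReal.ofReal (q ω) ∂μ ≤ ENNReal.ofReal (r ^ 2) := by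
      calc ∫⁻ ω, ENNReal.ofReal (q ω) ∂μ
          ≤ ∫⁻ _, ENNReal.ofReal (r ^ 2) ∂μ := by
            apply lintegral_mono_ae
            filter_upwards [hae] with ω h
            exact ENNReal.ofReal_le_ofReal (pow_le_pow_left₀ h.2.2.2.1 h.2.2.2.2 2)
        _ = ENNReal.ofReal (r ^ 2) := by simp
    have hGQ : (fun ω => g ω * q ω) = fun ω => σ ^ 2 * ξ ω ^ 2 * L ω ^ 2 := by
      funext ω; simp only [hg, hq]
    have hGQint : Integrable (fun ω => g ω * q ω) μ := by rw [hGQ]; exact hGint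
    have hGQ0 : ∀ ω, 0 ≤ g ω * q ω := by
      intro ω; simp only [hg, hq]
      exact mul_nonneg (mul_nonneg (sq_nonneg σ) (sq_nonneg _)) (sq_nonneg _)
    have hfin : ∫⁻ ω, ENNReal.ofReal (g ω * q ω) ∂μ ≠ ⊤ :=
      ne_of_lt ((hasFiniteIntegral_iff_ofReal
        (Filter.Eventually.of_forall hGQ0)).1 hGQint.2)
    have heq : ∫ ω, σ ^ 2 * ξ ω ^ 2 * L ω ^ 2 ∂μ
        = (∫⁻ ω, ENNReal.ofReal (g ω * q ω) ∂μ).toReal := by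
      rw [← hGQ, integral_eq_lintegral_of_nonneg_ae
        (Filter.Eventually.of_forall hGQ0) hGQint.1]
    rw [heq]
    by_cases htop : ∫⁻ ω, ENNReal.ofReal (g ω) ∂μ = ⊤
    · have h0 : ∫⁻ ω, ENNReal.ofReal (q ω) ∂μ = 0 := by
        by_contra hne
        rw [hmul, htop, ENNReal.top_mul hne] at hfin
        exact hfin rfl
      rw [hmul, h0, mul_zero]
      simpa using (by positivity : (0 : ℝ) ≤ σ ^ 2 * r ^ 2)
    · have hgint : Integrable g μ := by
        refine ⟨hgmeas.aestronglyMeasurable, ?_⟩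
        rw [hasFiniteIntegral_iff_norm]
        refine lt_of_le_of_lt (le_of_eq (lintegral_congr fun ω => ?_)) (lt_top_iff_ne_top.mpr htop)
        rw [Real.norm_eq_abs, abs_of_nonneg (by positivity : (0 : ℝ) ≤ g ω)]
      have hge : ∫⁻ ω, ENNReal.ofReal (g ω) ∂μ = ENNReal.ofReal (∫ ω, g ω ∂μ) :=
        (ofReal_integral_eq_lintegral_ofReal hgint
          (Filter.Eventually.of_forall fun ω => by positivity)).symm
      have hgle : ∫ ω, g ω ∂μ ≤ σ ^ 2 := by
        rw [hg]
        calc ∫ ω, σ ^ 2 * ξ ω ^ 2 ∂μ = σ ^ 2 * ∫ ω, ξ ω ^ 2 ∂μ := integral_const_mul _ _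
          _ ≤ σ ^ 2 * 1 := mul_le_mul_of_nonneg_left hvar (sq_nonneg _)
          _ = σ ^ 2 := mul_one _
      apply ENNReal.toReal_le_of_le_ofReal (by positivity)
      rw [hmul, hge]
      calc ENNReal.ofReal (∫ ω, g ω ∂μ) * ∫⁻ ω, ENNReal.ofReal (q ω) ∂μ
          ≤ ENNReal.ofReal (σ ^ 2) * ENNReal.ofReal (r ^ 2) :=
            mul_le_mul' (ENNReal.ofReal_le_ofReal hgle) hqle
        _ = ENNReal.ofReal (σ ^ 2 * r ^ 2) := (ENNReal.ofReal_mul (sq_nonneg σ)).symm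
  -- conclusion
  calc ∫ ω, F ω ∂μ
      ≤ 4 * r ^ 2 * ∫ ω, S ω ^ 2 ∂μ + 4 * N ^ 2
        + 2 * ∫ ω, σ ^ 2 * ξ ω ^ 2 * L ω ^ 2 ∂μ := by rw [← step2]; exact step1
    _ ≤ 4 * r ^ 2 * N ^ 2 + 4 * N ^ 2 + 2 * (σ ^ 2 * r ^ 2) := by
        rw [hSint_eq]
        linarith
    _ = 4 * (r ^ 2 + 1) * N ^ 2 + 2 * σ ^ 2 * r ^ 2 := by ring
end

section
/- Let φ = √Z · η where Z > 0 is a scalar random variable with E[Z²] < ∞, independent of a random vector η ∈ ℝⁿ with E[ηηᵀ] = Σ₀, and suppose E[(zᵀη·ηᵀx)²] ≤ χ·‖z‖_{Σ₀}²·‖x‖_{Σ₀}² for all x, z. Then with Σ = E[φφᵀ] = E[Z]·Σ₀, one has E[(zᵀφ·φᵀx)²] ≤ χ·(E[Z²]/E[Z]²)·‖z‖_Σ²·‖x‖_Σ² for all x, z ∈ ℝⁿ. -/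
open MeasureTheory ProbabilityTheory

/-- Scale mixtures: if `φ = √Z · η` with `Z > 0` a.s., `E[Z²] < ∞`, `Z` independent of `η`,
`Sig0 = E[ηηᵀ]`, and `E[(zᵀη ηᵀx)²] ≤ χ ‖z‖_{Sig0}² ‖x‖_{Sig0}²`, then with `Σ = E[Z] Sig0`
(which equals `E[φφᵀ]`) one has
`E[(zᵀφ φᵀx)²] ≤ χ (E[Z²]/E[Z]²) ‖z‖_Σ² ‖x‖_Σ²`. -/
theorem stmt11 {n : ℕ} {Ω : Type*} [MeasurableSpace Ω] (μ : Measure Ω)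
    [IsProbabilityMeasure μ]
    (Z : Ω → ℝ) (η φ : Ω → EuclideanSpace ℝ (Fin n))
    (Sig0 : Matrix (Fin n) (Fin n) ℝ) (χ : ℝ)
    (hφ : ∀ ω, φ ω = Real.sqrt (Z ω) • η ω)
    (hZpos : ∀ᵐ ω ∂μ, 0 < Z ω)
    (hZmeas : Measurable Z) (hηmeas : Measurable η)
    (hZ1 : Integrable Z μ) (hZ2 : Integrable (fun ω => (Z ω) ^ 2) μ)
    (hη2 : ∀ i j, Integrable (fun ω => η ω i * η ω j) μ)
    (hindep : IndepFun Z η μ)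
    (hSig0 : ∀ i j, Sig0 i j = ∫ ω, η ω i * η ω j ∂μ)
    (hη4 : ∀ x z : EuclideanSpace ℝ (Fin n),
      ∫ ω, ((∑ i, z i * η ω i) * (∑ i, η ω i * x i)) ^ 2 ∂μ
        ≤ χ * (∑ i, ∑ j, z i * Sig0 i j * z j) * (∑ i, ∑ j, x i * Sig0 i j * x j)) :
    (∀ i j, ∫ ω, φ ω i * φ ω j ∂μ = (∫ ω, Z ω ∂μ) * Sig0 i j) ∧
    ∀ x z : EuclideanSpace ℝ (Fin n),
      ∫ ω, ((∑ i, z i * φ ω i) * (∑ i, φ ω i * x i)) ^ 2 ∂μ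
        ≤ χ * ((∫ ω, (Z ω) ^ 2 ∂μ) / (∫ ω, Z ω ∂μ) ^ 2) *
          ((∫ ω, Z ω ∂μ) * ∑ i, ∑ j, z i * Sig0 i j * z j) *
          ((∫ ω, Z ω ∂μ) * ∑ i, ∑ j, x i * Sig0 i j * x j) := by
  have hηi : ∀ i, Measurable (fun ω => η ω i) := fun i =>
    (measurable_pi_apply i).comp ((WithLp.measurable_ofLp 2 (Fin n → ℝ)).comp hηmeas)
  have hZint : 0 < ∫ ω, Z ω ∂μ := by
    rw [integral_pos_iff_support_of_nonneg_ae
      (hZpos.mono fun ω h => le_of_lt h) hZ1, pos_iff_ne_zero]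
    intro h0
    have hzero : ∀ᵐ ω ∂μ, Z ω = 0 := by
      rw [ae_iff]
      simpa [Function.support] using h0
    obtain ⟨ω, h1, h2⟩ := (hZpos.and hzero).exists
    rw [h2] at h1
    exact lt_irrefl 0 h1
  constructor
  · intro i j
    have hcong : (fun ω => φ ω i * φ ω j) =ᵐ[μ]
        (fun ω => Z ω * (η ω i * η ω j)) := by
      filter_upwards [hZpos] with ω hω
      simp only [hφ ω, PiLp.smul_apply, smul_eq_mul]
      rw [show Real.sqrt (Z ω) * η ω i * (Real.sqrt (Z ω) * η ω j)
          = Real.sqrt (Z ω) * Real.sqrt (Z ω) * (η ω i * η ω j) by ring,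
        Real.mul_self_sqrt hω.le]
    rw [integral_congr_ae hcong]
    have hind2 : IndepFun Z (fun ω => η ω i * η ω j) μ :=
      hindep.comp measurable_id (show Measurable (fun v : EuclideanSpace ℝ (Fin n) => v i * v j) from
        ((measurable_pi_apply i).comp (WithLp.measurable_ofLp 2 (Fin n → ℝ))).mul
          ((measurable_pi_apply j).comp (WithLp.measurable_ofLp 2 (Fin n → ℝ))))
    have := hind2.integral_mul_eq_mul_integral hZ1.aestronglyMeasurable (hη2 i j).aestronglyMeasurable
    rw [show (Z * fun ω => η ω i * η ω j) = fun ω => Z ω * (η ω i * η ω j) from rfl] at this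
    rw [this, hSig0 i j]
  · intro x z
    have hcong : (fun ω => ((∑ i, z i * φ ω i) * (∑ i, φ ω i * x i)) ^ 2) =ᵐ[μ]
        (fun ω => Z ω ^ 2 * ((∑ i, z i * η ω i) * (∑ i, η ω i * x i)) ^ 2) := by
      filter_upwards [hZpos] with ω hω
      simp only [hφ ω, PiLp.smul_apply, smul_eq_mul]
      have h1 : ∑ i, z i * (Real.sqrt (Z ω) * η ω i)
          = Real.sqrt (Z ω) * ∑ i, z i * η ω i := by
        rw [Finset.mul_sum]; exact Finset.sum_congr rfl fun i _ => by ring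
      have h2 : ∑ i, (Real.sqrt (Z ω) * η ω i) * x i
          = Real.sqrt (Z ω) * ∑ i, η ω i * x i := by
        rw [Finset.mul_sum]; exact Finset.sum_congr rfl fun i _ => by ring
      rw [h1, h2, show Real.sqrt (Z ω) * (∑ i, z i * η ω i) *
          (Real.sqrt (Z ω) * ∑ i, η ω i * x i)
          = Real.sqrt (Z ω) * Real.sqrt (Z ω) *
            ((∑ i, z i * η ω i) * ∑ i, η ω i * x i) by ring,
        Real.mul_self_sqrt hω.le]
      ring
    rw [integral_congr_ae hcong]
    have hgm : Measurable (fun ω => ((∑ i, z i * η ω i) * (∑ i, η ω i * x i)) ^ 2) := by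
      apply Measurable.pow_const
      exact (Finset.measurable_sum _ fun i _ => (hηi i).const_mul (z i)).mul
        (Finset.measurable_sum _ fun i _ => (hηi i).mul_const (x i))
    have hind2 : IndepFun (fun ω => Z ω ^ 2)
        (fun ω => ((∑ i, z i * η ω i) * (∑ i, η ω i * x i)) ^ 2) μ := by
      have hg : Measurable (fun v : EuclideanSpace ℝ (Fin n) =>
          ((∑ i, z i * v i) * (∑ i, v i * x i)) ^ 2) :=
        ((Finset.measurable_sum _ fun i _ =>
            ((measurable_pi_apply i).comp (WithLp.measurable_ofLp 2 (Fin n → ℝ))).const_mul (z i)).mul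
          (Finset.measurable_sum _ fun i _ =>
            ((measurable_pi_apply i).comp (WithLp.measurable_ofLp 2 (Fin n → ℝ))).mul_const (x i))).pow_const 2
      exact hindep.comp (measurable_id.pow_const 2) hg
    have hmul := hind2.integral_mul_eq_mul_integral hZ2.aestronglyMeasurable hgm.aestronglyMeasurable
    rw [show ((fun ω => Z ω ^ 2) * fun ω => ((∑ i, z i * η ω i) * (∑ i, η ω i * x i)) ^ 2)
        = fun ω => Z ω ^ 2 * ((∑ i, z i * η ω i) * (∑ i, η ω i * x i)) ^ 2 from rfl] at hmul
    rw [hmul]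
    have hZ2nn : 0 ≤ ∫ ω, Z ω ^ 2 ∂μ := integral_nonneg fun ω => sq_nonneg _
    calc (∫ ω, Z ω ^ 2 ∂μ) * ∫ ω, ((∑ i, z i * η ω i) * (∑ i, η ω i * x i)) ^ 2 ∂μ
        ≤ (∫ ω, Z ω ^ 2 ∂μ) * (χ * (∑ i, ∑ j, z i * Sig0 i j * z j) *
            (∑ i, ∑ j, x i * Sig0 i j * x j)) := by
          exact mul_le_mul_of_nonneg_left (hη4 x z) hZ2nn
      _ = χ * ((∫ ω, (Z ω) ^ 2 ∂μ) / (∫ ω, Z ω ∂μ) ^ 2) *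
          ((∫ ω, Z ω ∂μ) * ∑ i, ∑ j, z i * Sig0 i j * z j) *
          ((∫ ω, Z ω ∂μ) * ∑ i, ∑ j, x i * Sig0 i j * x j) := by
          field_simp
end

section
/- Let u : [0,1] → ℝ be convex and differentiable with M-Lipschitz derivative, let u_* = min_{t∈[0,1]} u(t), and let t_i = (2i-1)/(2m) for i = 1,...,m. Then |(u(1) - u(0)) - (1/m)·Σ_{i=1}^m u'(t_i)| ≤ (1/(4m))·[√(2M(u(1)-u_*)) + √(2M(u(0)-u_*))]. -/
open Set Finset

namespace Stmt18

noncomputable def W (u u' : ℝ → ℝ) (d x y : ℝ) : ℝ :=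
  (d - y) * u' y - (d - x) * u' x + (u y - u x)

lemma W_self (u u' : ℝ → ℝ) (d x : ℝ) : W u u' d x x = 0 := by unfold W; ring

lemma W_add (u u' : ℝ → ℝ) (d x y z : ℝ) :
    W u u' d x y + W u u' d y z = W u u' d x z := by unfold W; ring

lemma W_shift (u u' : ℝ → ℝ) (d e x y : ℝ) :
    W u u' d x y = W u u' e x y + (d - e) * (u' y - u' x) := by unfold W; ring

lemma W_nonneg {u u' : ℝ → ℝ} {d x y : ℝ} (t1 : u x + u' x * (y - x) ≤ u y)
    (h : 0 ≤ (d - y) * (u' y - u' x)) : 0 ≤ W u u' d x y := by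
  unfold W; nlinarith [t1, h]

lemma W_nonpos {u u' : ℝ → ℝ} {d x y : ℝ} (t2 : u y + u' y * (x - y) ≤ u x)
    (h : 0 ≤ (x - d) * (u' y - u' x)) : W u u' d x y ≤ 0 := by
  unfold W; nlinarith [t2, h]

lemma W_le {u u' : ℝ → ℝ} {d x y : ℝ} (t2 : u y + u' y * (x - y) ≤ u x) :
    W u u' d x y ≤ (d - x) * (u' y - u' x) := by
  unfold W; nlinarith [t2]

noncomputable def aa (m : ℕ) : ℕ → ℝ := fun i => i / m
noncomputable def tt (m : ℕ) : ℕ → ℝ := fun i => (2 * i + 1) / (2 * m)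
noncomputable def pp (m : ℕ) (c : ℝ) (i : ℕ) : ℝ := min (tt m i) c
noncomputable def qq (m : ℕ) (c : ℝ) (i : ℕ) : ℝ := min (aa m (i+1)) c
noncomputable def rr (m : ℕ) (c : ℝ) (i : ℕ) : ℝ := max (tt m i) (min c (aa m (i+1)))

lemma sumsq {α : ℕ → ℝ} {K : ℝ} (m : ℕ)
    (h0 : ∀ i, i < m → 0 ≤ α i) (h1 : ∀ i, i < m → α i ≤ K) :
    (∑ i ∈ range m, α i) ^ 2 ≤ K * ∑ i ∈ range m, (2 * (i : ℝ) + 1) * α i := by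
  induction m with
  | zero => simp
  | succ n ih =>
    have hS : ∑ i ∈ range n, α i ≤ n * K := by
      calc ∑ i ∈ range n, α i ≤ ∑ _i ∈ range n, K :=
            Finset.sum_le_sum fun i hi => h1 i (by simp at hi; omega)
        _ = n * K := by simp [mul_comm]
    have ihn := ih (fun i hi => h0 i (by omega)) (fun i hi => h1 i (by omega))
    rw [Finset.sum_range_succ, Finset.sum_range_succ]
    have hn0 := h0 n (by omega)
    have hnK := h1 n (by omega)
    nlinarith [mul_le_mul_of_nonneg_right hS hn0, mul_le_mul_of_nonneg_right hnK hn0]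

lemma sum_chain {f φ : ℕ → ℝ} {m : ℕ} (h0 : 0 ≤ φ 0)
    (hstep : ∀ n, n < m → φ n + f n ≤ φ (n + 1)) :
    ∑ i ∈ range m, f i ≤ φ m := by
  induction m with
  | zero => simpa using h0
  | succ n ih =>
    rw [Finset.sum_range_succ]
    have h1 := hstep n (by omega)
    have h2 := ih fun k hk => hstep k (by omega)
    linarith


lemma tangent {u u' : ℝ → ℝ} (hconv : ConvexOn ℝ (Icc 0 1) u)
    (hderiv : ∀ t ∈ Icc (0:ℝ) 1, HasDerivWithinAt u (u' t) (Icc 0 1) t) :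
    ∀ x ∈ Icc (0:ℝ) 1, ∀ y ∈ Icc (0:ℝ) 1, u x + u' x * (y - x) ≤ u y := by
  intro x hx y hy
  rcases lt_trichotomy x y with h | h | h
  · have hs := hconv.le_slope_of_hasDerivWithinAt hx hy h (hderiv x hx)
    rw [slope_def_field] at hs
    have hxy : 0 < y - x := by linarith
    have := (le_div_iff₀ hxy).1 hs
    linarith
  · subst h; simp
  · have hs := hconv.slope_le_of_hasDerivWithinAt hy hx h (hderiv x hx)
    rw [slope_def_field] at hs
    have hxy : 0 < x - y := by linarith
    have h2 := (div_le_iff₀ hxy).1 hs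
    have h3 : u' x * (y - x) = -(u' x * (x - y)) := by ring
    linarith

lemma descent1 {u u' : ℝ → ℝ} {M : ℝ}
    (hderiv : ∀ t ∈ Icc (0:ℝ) 1, HasDerivWithinAt u (u' t) (Icc 0 1) t)
    (hLip : ∀ t ∈ Icc (0:ℝ) 1, ∀ t' ∈ Icc (0:ℝ) 1, |u' t - u' t'| ≤ M * |t - t'|) :
    ∀ x ∈ Icc (0:ℝ) 1, ∀ y ∈ Icc (0:ℝ) 1, x ≤ y →
      u y - u x - u' x * (y - x) ≤ M / 2 * (y - x)^2 := by
  intro x hx y hy hxy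
  have hsub : Icc x y ⊆ Icc (0:ℝ) 1 := Icc_subset_Icc hx.1 hy.2
  set g : ℝ → ℝ := fun s => u x + u' x * (s - x) + M / 2 * (s - x)^2 - u s with hg
  have hucont : ContinuousOn u (Icc x y) :=
    fun s hs => ((hderiv s (hsub hs)).continuousWithinAt).mono hsub
  have hgcont : ContinuousOn g (Icc x y) := by
    apply ContinuousOn.sub _ hucont
    fun_prop
  have hmono : MonotoneOn g (Icc x y) := by
    apply monotoneOn_of_hasDerivWithinAt_nonneg (convex_Icc x y) hgcont
      (f' := fun s => u' x + M * (s - x) - u' s)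
    · intro s hs
      rw [interior_Icc] at hs
      obtain ⟨hs1, hs2⟩ := hs
      have hsI : s ∈ Icc (0:ℝ) 1 := hsub ⟨hs1.le, hs2.le⟩
      have hu : HasDerivWithinAt u (u' s) (interior (Icc x y)) s :=
        (hderiv s hsI).mono (by rw [interior_Icc]; exact Set.Ioo_subset_Icc_self.trans hsub)
      have h1 : HasDerivAt (fun s : ℝ => s - x) 1 s := by
        simpa using (hasDerivAt_id s).sub_const x
      have h2 : HasDerivAt (fun s : ℝ => (s - x)^2) (2*(s-x)) s := by
        have := h1.fun_pow 2
        simpa using this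
      have hp : HasDerivAt (fun s : ℝ => u x + u' x * (s - x) + M / 2 * (s - x)^2)
          (u' x + M * (s - x)) s := by
        have := ((h1.const_mul (u' x)).const_add (u x)).fun_add (h2.const_mul (M/2))
        exact this.congr_deriv (by ring)
      exact (hp.hasDerivWithinAt.sub hu)
    · intro s hs
      rw [interior_Icc] at hs
      obtain ⟨hs1, hs2⟩ := hs
      have hsI : s ∈ Icc (0:ℝ) 1 := hsub ⟨hs1.le, hs2.le⟩
      have h0 := hLip s hsI x hx
      rw [abs_of_nonneg (by linarith : (0:ℝ) ≤ s - x)] at h0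
      have h2 : u' s - u' x ≤ M * (s - x) := (le_abs_self _).trans h0
      linarith
  have := hmono (left_mem_Icc.2 hxy) (right_mem_Icc.2 hxy) hxy
  simp only [hg] at this
  nlinarith [this]

lemma descent2 {u u' : ℝ → ℝ} {M : ℝ}
    (hderiv : ∀ t ∈ Icc (0:ℝ) 1, HasDerivWithinAt u (u' t) (Icc 0 1) t)
    (hLip : ∀ t ∈ Icc (0:ℝ) 1, ∀ t' ∈ Icc (0:ℝ) 1, |u' t - u' t'| ≤ M * |t - t'|) :
    ∀ x ∈ Icc (0:ℝ) 1, ∀ y ∈ Icc (0:ℝ) 1, x ≤ y →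
      u x - u y + u' y * (y - x) ≤ M / 2 * (y - x)^2 := by
  intro x hx y hy hxy
  have hsub : Icc x y ⊆ Icc (0:ℝ) 1 := Icc_subset_Icc hx.1 hy.2
  set g : ℝ → ℝ := fun s => u s + u' y * (y - s) - M / 2 * (y - s)^2 with hg
  have hucont : ContinuousOn u (Icc x y) :=
    fun s hs => ((hderiv s (hsub hs)).continuousWithinAt).mono hsub
  have hgcont : ContinuousOn g (Icc x y) := by
    apply ContinuousOn.sub (ContinuousOn.add hucont (by fun_prop)) (by fun_prop)
  have hmono : MonotoneOn g (Icc x y) := by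
    apply monotoneOn_of_hasDerivWithinAt_nonneg (convex_Icc x y) hgcont
      (f' := fun s => u' s - u' y + M * (y - s))
    · intro s hs
      rw [interior_Icc] at hs
      obtain ⟨hs1, hs2⟩ := hs
      have hsI : s ∈ Icc (0:ℝ) 1 := hsub ⟨hs1.le, hs2.le⟩
      have hu : HasDerivWithinAt u (u' s) (interior (Icc x y)) s :=
        (hderiv s hsI).mono (by rw [interior_Icc]; exact Set.Ioo_subset_Icc_self.trans hsub)
      have h1 : HasDerivAt (fun s : ℝ => y - s) (-1) s := by
        simpa using (hasDerivAt_id s).const_sub y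
      have h2 : HasDerivAt (fun s : ℝ => (y - s)^2) (-(2*(y-s))) s := by
        have := h1.fun_pow 2
        exact this.congr_deriv (by ring)
      have := (hu.fun_add ((h1.const_mul (u' y)).hasDerivWithinAt)).fun_sub
        ((h2.const_mul (M/2)).hasDerivWithinAt)
      exact this.congr_deriv (by ring)
    · intro s hs
      rw [interior_Icc] at hs
      obtain ⟨hs1, hs2⟩ := hs
      have hsI : s ∈ Icc (0:ℝ) 1 := hsub ⟨hs1.le, hs2.le⟩
      have h0 := hLip y hy s hsI
      rw [abs_of_nonneg (by linarith : (0:ℝ) ≤ y - s)] at h0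
      have h2 : u' y - u' s ≤ M * (y - s) := (le_abs_self _).trans h0
      linarith
  have := hmono (left_mem_Icc.2 hxy) (right_mem_Icc.2 hxy) hxy
  simp only [hg] at this
  nlinarith [this]

lemma half (u u' : ℝ → ℝ) (M ustar c : ℝ) (m : ℕ) (hm : 0 < m)
    (tang : ∀ x ∈ Icc (0:ℝ) 1, ∀ y ∈ Icc (0:ℝ) 1, u x + u' x * (y - x) ≤ u y)
    (desc : ∀ x ∈ Icc (0:ℝ) 1, ∀ y ∈ Icc (0:ℝ) 1, x ≤ y →
      u y - u x - u' x * (y - x) ≤ M / 2 * (y - x)^2)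
    (hu0 : ustar ≤ u 0) (hu1 : ustar ≤ u 1)
    (hcI : c ∈ Icc (0:ℝ) 1) (hcL : c * u' c ≤ u c - ustar)
    (hcR : -((1 - c) * u' c) ≤ u c - ustar)
    (hM : 0 ≤ M) :
    ∑ i ∈ range m, W u u' (aa m (i+1)) (tt m i) (aa m (i+1))
      ≤ Real.sqrt (M / (8 * (m:ℝ)^2) * (u 0 - ustar))
        + Real.sqrt (M / (8 * (m:ℝ)^2) * (u 1 - ustar)) := by
  have hm' : (0:ℝ) < m := by exact_mod_cast hm
  have hc0 : (0:ℝ) ≤ c := hcI.1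
  have hc1 : c ≤ 1 := hcI.2
  have haI : ∀ i : ℕ, i ≤ m → aa m i ∈ Icc (0:ℝ) 1 := by
    intro i hi
    constructor
    · unfold aa; positivity
    · unfold aa; rw [div_le_one hm']; exact_mod_cast hi
  have htI : ∀ i : ℕ, i < m → tt m i ∈ Icc (0:ℝ) 1 := by
    intro i hi
    constructor
    · unfold tt; positivity
    · unfold tt
      rw [div_le_one (by positivity)]
      have : (i:ℝ) + 1 ≤ m := by exact_mod_cast hi
      linarith
  have hat : ∀ i : ℕ, aa m i ≤ tt m i := by
    intro i
    unfold aa tt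
    rw [div_le_div_iff₀ hm' (by positivity)]
    nlinarith [hm', (Nat.cast_nonneg i : (0:ℝ) ≤ i)]
  have hta : ∀ i : ℕ, tt m i ≤ aa m (i+1) := by
    intro i
    unfold aa tt
    rw [div_le_div_iff₀ (by positivity) hm']
    push_cast
    nlinarith [hm', (Nat.cast_nonneg i : (0:ℝ) ≤ i)]
  have hgap : ∀ i : ℕ, aa m (i+1) - tt m i = 1 / (2*m) := by
    intro i
    unfold aa tt
    push_cast
    field_simp
    ring
  have htv : ∀ i : ℕ, tt m i = (2*(i:ℝ)+1) * (1/(2*m)) := by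
    intro i
    unfold tt
    field_simp
  have mono : ∀ x ∈ Icc (0:ℝ) 1, ∀ y ∈ Icc (0:ℝ) 1, x ≤ y → u' x ≤ u' y := by
    intro x hx y hy hxy
    rcases eq_or_lt_of_le hxy with rfl | h
    · exact le_rfl
    · nlinarith [tang x hx y hy, tang y hy x hx]
  set K : ℝ := M / (8 * (m:ℝ)^2) with hKdef
  have hK0 : 0 ≤ K := by rw [hKdef]; positivity
  -- memberships
  have hpI : ∀ i, i < m → pp m c i ∈ Icc (0:ℝ) 1 := fun i hi =>
    ⟨le_min (htI i hi).1 hc0, le_trans (min_le_right _ _) hc1⟩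
  have hqI : ∀ i, i < m → qq m c i ∈ Icc (0:ℝ) 1 := fun i hi =>
    ⟨le_min (haI (i+1) hi).1 hc0, le_trans (min_le_right _ _) hc1⟩
  have hrI : ∀ i, i < m → rr m c i ∈ Icc (0:ℝ) 1 := fun i hi =>
    ⟨le_trans (htI i hi).1 (le_max_left _ _),
      max_le (htI i hi).2 (le_trans (min_le_left _ _) hc1)⟩
  have hpq : ∀ i, pp m c i ≤ qq m c i := fun i => min_le_min (hta i) le_rfl
  have hqa : ∀ i, qq m c i ≤ aa m (i+1) := fun i => min_le_left _ _
  have hra : ∀ i, rr m c i ≤ aa m (i+1) := fun i => max_le (hta i) (min_le_right _ _)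
  have htr : ∀ i, tt m i ≤ rr m c i := fun i => le_max_left _ _
  -- nonnegativity
  have hALnn : ∀ i, i < m → 0 ≤ W u u' (aa m (i+1)) (pp m c i) (qq m c i) := by
    intro i hi
    exact W_nonneg (tang _ (hpI i hi) _ (hqI i hi))
      (mul_nonneg (by linarith [hqa i]) (by linarith [mono _ (hpI i hi) _ (hqI i hi) (hpq i)]))
  have hARnn : ∀ i, i < m → 0 ≤ W u u' (aa m (i+1)) (rr m c i) (aa m (i+1)) := by
    intro i hi
    exact W_nonneg (tang _ (hrI i hi) _ (haI (i+1) hi))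
      (mul_nonneg (by linarith [hra i]) (by linarith [mono _ (hrI i hi) _ (haI (i+1) hi) (hra i)]))
  -- splitting
  have hsplit : ∀ i, i < m →
      W u u' (aa m (i+1)) (pp m c i) (qq m c i) + W u u' (aa m (i+1)) (rr m c i) (aa m (i+1))
        = W u u' (aa m (i+1)) (tt m i) (aa m (i+1)) := by
    intro i hi
    rcases le_total c (tt m i) with h | h
    · have e1 : pp m c i = c := min_eq_right h
      have e2 : qq m c i = c := min_eq_right (h.trans (hta i))
      have e3 : rr m c i = tt m i := by
        unfold rr
        rw [min_eq_left (h.trans (hta i)), max_eq_left h]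
      rw [e1, e2, e3, W_self]; ring
    · rcases le_total c (aa m (i+1)) with h2 | h2
      · have e1 : pp m c i = tt m i := min_eq_left h
        have e2 : qq m c i = c := min_eq_right h2
        have e3 : rr m c i = c := by
          unfold rr
          rw [min_eq_left h2, max_eq_right h]
        rw [e1, e2, e3, W_add]
      · have e1 : pp m c i = tt m i := min_eq_left h
        have e2 : qq m c i = aa m (i+1) := min_eq_left h2
        have e3 : rr m c i = aa m (i+1) := by
          unfold rr
          rw [min_eq_right h2, max_eq_right (hta i)]
        rw [e1, e2, e3, W_self]; ring
  -- K bound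
  have hAKfull : ∀ i, i < m → W u u' (aa m (i+1)) (tt m i) (aa m (i+1)) ≤ K := by
    intro i hi
    have hd := desc _ (htI i hi) _ (haI (i+1) hi) (hta i)
    have hWd : W u u' (aa m (i+1)) (tt m i) (aa m (i+1))
        = u (aa m (i+1)) - u (tt m i) - u' (tt m i) * (aa m (i+1) - tt m i) := by
      unfold W; ring
    rw [hWd]
    calc u (aa m (i+1)) - u (tt m i) - u' (tt m i) * (aa m (i+1) - tt m i)
        ≤ M / 2 * (aa m (i+1) - tt m i)^2 := hd
      _ = K := by
            rw [hgap i, hKdef, div_pow, one_pow, div_mul_div_comm, mul_one]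
            congr 1
            ring
  have hALK : ∀ i, i < m → W u u' (aa m (i+1)) (pp m c i) (qq m c i) ≤ K := fun i hi => by
    linarith [hARnn i hi, hsplit i hi, hAKfull i hi]
  have hARK : ∀ i, i < m → W u u' (aa m (i+1)) (rr m c i) (aa m (i+1)) ≤ K := fun i hi => by
    linarith [hALnn i hi, hsplit i hi, hAKfull i hi]
  -- weighted charges
  have hf6 : ∀ i, i < m → (2*(i:ℝ)+1) * W u u' (aa m (i+1)) (pp m c i) (qq m c i)
      ≤ -W u u' 0 (pp m c i) (qq m c i) := by
    intro i hi
    rcases le_total c (tt m i) with h | h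
    · have e1 : pp m c i = c := min_eq_right h
      have e2 : qq m c i = c := min_eq_right (h.trans (hta i))
      rw [e1, e2, W_self, W_self]
      simp
    · have e1 : pp m c i = tt m i := min_eq_left h
      rw [e1]
      have hqI' := hqI i hi
      have htI' := htI i hi
      have hqq : tt m i ≤ qq m c i := by rw [← e1]; exact hpq i
      have hmu : 0 ≤ u' (qq m c i) - u' (tt m i) :=
        sub_nonneg.2 (mono _ htI' _ hqI' hqq)
      have h1 : W u u' (aa m (i+1)) (tt m i) (qq m c i)
          ≤ (aa m (i+1) - tt m i) * (u' (qq m c i) - u' (tt m i)) :=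
        W_le (tang _ hqI' _ htI')
      have hnp : W u u' (tt m i) (tt m i) (qq m c i) ≤ 0 :=
        W_nonpos (tang _ hqI' _ htI') (by rw [sub_self, zero_mul])
      have hsh := W_shift u u' 0 (tt m i) (tt m i) (qq m c i)
      have htm0 : (0:ℝ) ≤ tt m i := htI'.1
      calc (2*(i:ℝ)+1) * W u u' (aa m (i+1)) (tt m i) (qq m c i)
          ≤ (2*(i:ℝ)+1) * ((aa m (i+1) - tt m i) * (u' (qq m c i) - u' (tt m i))) :=
            mul_le_mul_of_nonneg_left h1 (by positivity)
        _ = tt m i * (u' (qq m c i) - u' (tt m i)) := by rw [hgap i, htv i]; ring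
        _ ≤ -W u u' 0 (tt m i) (qq m c i) := by nlinarith [hnp, hsh]
  have hf7 : ∀ i, i < m → (2*((m:ℝ)-1-(i:ℝ))+1) * W u u' (aa m (i+1)) (rr m c i) (aa m (i+1))
      ≤ W u u' 1 (rr m c i) (aa m (i+1)) := by
    intro i hi
    have hrI' := hrI i hi
    have haI' := haI (i+1) hi
    have hmu : 0 ≤ u' (aa m (i+1)) - u' (rr m c i) :=
      sub_nonneg.2 (mono _ hrI' _ haI' (hra i))
    have h1 : W u u' (aa m (i+1)) (rr m c i) (aa m (i+1))
        ≤ (aa m (i+1) - rr m c i) * (u' (aa m (i+1)) - u' (rr m c i)) :=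
      W_le (tang _ haI' _ hrI')
    have h2 : aa m (i+1) - rr m c i ≤ 1/(2*m) := by
      have := htr i
      have := hgap i
      linarith
    have h3 : W u u' (aa m (i+1)) (rr m c i) (aa m (i+1))
        ≤ 1/(2*m) * (u' (aa m (i+1)) - u' (rr m c i)) := by
      calc W u u' (aa m (i+1)) (rr m c i) (aa m (i+1))
          ≤ (aa m (i+1) - rr m c i) * (u' (aa m (i+1)) - u' (rr m c i)) := h1
        _ ≤ 1/(2*m) * (u' (aa m (i+1)) - u' (rr m c i)) :=
            mul_le_mul_of_nonneg_right h2 hmu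
    have hsh := W_shift u u' 1 (aa m (i+1)) (rr m c i) (aa m (i+1))
    have hone : 1 - aa m (i+1) = ((m:ℝ)-1-(i:ℝ)) * (2*(1/(2*(m:ℝ)))) := by
      have hmne : (m:ℝ) ≠ 0 := ne_of_gt hm'
      unfold aa
      push_cast
      field_simp
      ring
    have hmi : (0:ℝ) ≤ (m:ℝ)-1-(i:ℝ) := by
      have : (i:ℝ) + 1 ≤ m := by exact_mod_cast hi
      linarith
    have h4 := mul_le_mul_of_nonneg_left h3 (by linarith : (0:ℝ) ≤ 2*((m:ℝ)-1-(i:ℝ)))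
    have h5 : (1 - aa m (i+1)) * (u' (aa m (i+1)) - u' (rr m c i))
        = ((m:ℝ)-1-(i:ℝ)) * (2*(1/(2*(m:ℝ)))) * (u' (aa m (i+1)) - u' (rr m c i)) := by
      rw [hone]
    linarith [h4, hsh, h5]
  -- chain for Ti
  have hchainT : ∑ i ∈ range m, (-W u u' 0 (pp m c i) (qq m c i)) ≤ u 0 - ustar := by
    have hbase : (0:ℝ) ≤ -W u u' 0 0 (min (aa m 0) c) := by
      have h0 : aa m 0 = 0 := by unfold aa; simp
      rw [h0, min_eq_left hc0, W_self]
      simp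
    have hstep : ∀ n, n < m →
        -W u u' 0 0 (min (aa m n) c) + (-W u u' 0 (pp m c n) (qq m c n))
          ≤ -W u u' 0 0 (min (aa m (n+1)) c) := by
      intro n hn
      have hmn : min (aa m n) c ∈ Icc (0:ℝ) 1 :=
        ⟨le_min (haI n hn.le).1 hc0, (min_le_right _ _).trans hc1⟩
      have hord1 : min (aa m n) c ≤ pp m c n := min_le_min (hat n) le_rfl
      have hnp : W u u' 0 (min (aa m n) c) (pp m c n) ≤ 0 :=
        W_nonpos (tang _ (hpI n hn) _ hmn)
          (mul_nonneg (by linarith [hmn.1])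
            (by linarith [mono _ hmn _ (hpI n hn) hord1]))
      have e1 := W_add u u' 0 0 (min (aa m n) c) (pp m c n)
      have e2 := W_add u u' 0 0 (pp m c n) (qq m c n)
      have e3 : qq m c n = min (aa m (n+1)) c := rfl
      rw [← e3]
      linarith [e1, e2, hnp]
    have hch := sum_chain (f := fun i => -W u u' 0 (pp m c i) (qq m c i))
      (φ := fun n => -W u u' 0 0 (min (aa m n) c)) hbase hstep
    have ham : aa m m = 1 := by
      unfold aa; field_simp
    have hmc : min (aa m m) c = c := by rw [ham]; exact min_eq_right hc1
    simp only [hmc] at hch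
    have hfin : -W u u' 0 0 c ≤ u 0 - ustar := by
      unfold W
      nlinarith [hcL]
    linarith
  -- chain for Gi
  have hlift : ∀ i, i < m → W u u' 1 (rr m c i) (aa m (i+1))
      = W u u' 1 (max (rr m c i) c) (max (aa m (i+1)) c) := by
    intro i hi
    rcases le_total c (aa m (i+1)) with h | h
    · have e1 : max (aa m (i+1)) c = aa m (i+1) := max_eq_left h
      have hcr : c ≤ rr m c i := by
        calc c = min c (aa m (i+1)) := (min_eq_left h).symm
          _ ≤ rr m c i := le_max_right _ _
      have e2 : max (rr m c i) c = rr m c i := max_eq_left hcr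
      rw [e1, e2]
    · have e2 : rr m c i = aa m (i+1) := by
        unfold rr
        rw [min_eq_right h, max_eq_right (hta i)]
      rw [e2, max_eq_right h, W_self, W_self]
  have hchainG : ∑ i ∈ range m, W u u' 1 (rr m c i) (aa m (i+1)) ≤ u 1 - ustar := by
    have hbase : (0:ℝ) ≤ W u u' 1 c (max (aa m 0) c) := by
      have h0 : aa m 0 = 0 := by unfold aa; simp
      rw [h0, max_eq_right hc0, W_self]
    have hstep : ∀ n, n < m →
        W u u' 1 c (max (aa m n) c) + W u u' 1 (rr m c n) (aa m (n+1))
          ≤ W u u' 1 c (max (aa m (n+1)) c) := by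
      intro n hn
      rw [hlift n hn]
      have hmR : max (aa m n) c ∈ Icc (0:ℝ) 1 :=
        ⟨le_trans hc0 (le_max_right _ _), max_le (haI n hn.le).2 hc1⟩
      have hrR : max (rr m c n) c ∈ Icc (0:ℝ) 1 :=
        ⟨le_trans hc0 (le_max_right _ _), max_le (hrI n hn).2 hc1⟩
      have hord : max (aa m n) c ≤ max (rr m c n) c :=
        max_le_max (le_trans (hat n) (htr n)) le_rfl
      have hnn : 0 ≤ W u u' 1 (max (aa m n) c) (max (rr m c n) c) :=
        W_nonneg (tang _ hmR _ hrR)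
          (mul_nonneg (by linarith [hrR.2]) (by linarith [mono _ hmR _ hrR hord]))
      have e1 := W_add u u' 1 c (max (aa m n) c) (max (rr m c n) c)
      have e2 := W_add u u' 1 c (max (rr m c n) c) (max (aa m (n+1)) c)
      linarith [e1, e2, hnn]
    have hch := sum_chain (f := fun i => W u u' 1 (rr m c i) (aa m (i+1)))
      (φ := fun n => W u u' 1 c (max (aa m n) c)) hbase hstep
    have ham : aa m m = 1 := by unfold aa; field_simp
    have hmc : max (aa m m) c = 1 := by rw [ham]; exact max_eq_left hc1
    simp only [hmc] at hch
    have hfin : W u u' 1 c 1 ≤ u 1 - ustar := by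
      unfold W
      nlinarith [hcR]
    linarith
  -- combine with square-sum lemma
  have hSL : ∑ i ∈ range m, W u u' (aa m (i+1)) (pp m c i) (qq m c i)
      ≤ Real.sqrt (K * (u 0 - ustar)) := by
    apply Real.le_sqrt_of_sq_le
    calc (∑ i ∈ range m, W u u' (aa m (i+1)) (pp m c i) (qq m c i))^2
        ≤ K * ∑ i ∈ range m, (2*(i:ℝ)+1) * W u u' (aa m (i+1)) (pp m c i) (qq m c i) :=
          sumsq m hALnn hALK
      _ ≤ K * ∑ i ∈ range m, -W u u' 0 (pp m c i) (qq m c i) :=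
          mul_le_mul_of_nonneg_left
            (Finset.sum_le_sum fun i hi => hf6 i (Finset.mem_range.1 hi)) hK0
      _ ≤ K * (u 0 - ustar) := mul_le_mul_of_nonneg_left hchainT hK0
  have hcast : ∀ j, j < m → ((m - 1 - j : ℕ) : ℝ) = (m:ℝ) - 1 - (j:ℝ) := by
    intro j hj
    have h1 : m - 1 - j = m - (1 + j) := by omega
    rw [h1, Nat.cast_sub (by omega)]
    push_cast; ring
  have hSR : ∑ i ∈ range m, W u u' (aa m (i+1)) (rr m c i) (aa m (i+1))
      ≤ Real.sqrt (K * (u 1 - ustar)) := by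
    apply Real.le_sqrt_of_sq_le
    have hrefl1 : ∑ j ∈ range m,
        W u u' (aa m ((m-1-j)+1)) (rr m c (m-1-j)) (aa m ((m-1-j)+1))
        = ∑ i ∈ range m, W u u' (aa m (i+1)) (rr m c i) (aa m (i+1)) :=
      Finset.sum_range_reflect (fun i => W u u' (aa m (i+1)) (rr m c i) (aa m (i+1))) m
    have hsq := sumsq
      (α := fun j => W u u' (aa m ((m-1-j)+1)) (rr m c (m-1-j)) (aa m ((m-1-j)+1))) m
      (fun j hj => hARnn (m-1-j) (by omega)) (fun j hj => hARK (m-1-j) (by omega))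
    rw [hrefl1] at hsq
    have hrefl2 : ∑ j ∈ range m,
        (2*(j:ℝ)+1) * W u u' (aa m ((m-1-j)+1)) (rr m c (m-1-j)) (aa m ((m-1-j)+1))
        = ∑ i ∈ range m,
            (2*((m:ℝ)-1-(i:ℝ))+1) * W u u' (aa m (i+1)) (rr m c i) (aa m (i+1)) := by
      rw [← Finset.sum_range_reflect
        (fun i => (2*((m:ℝ)-1-(i:ℝ))+1) * W u u' (aa m (i+1)) (rr m c i) (aa m (i+1))) m]
      refine Finset.sum_congr rfl fun j hj => ?_
      have hj' := Finset.mem_range.1 hj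
      rw [hcast j hj']
      ring_nf
    calc (∑ i ∈ range m, W u u' (aa m (i+1)) (rr m c i) (aa m (i+1)))^2
        ≤ K * ∑ j ∈ range m,
            (2*(j:ℝ)+1) * W u u' (aa m ((m-1-j)+1)) (rr m c (m-1-j)) (aa m ((m-1-j)+1)) := hsq
      _ = K * ∑ i ∈ range m,
            (2*((m:ℝ)-1-(i:ℝ))+1) * W u u' (aa m (i+1)) (rr m c i) (aa m (i+1)) := by
          rw [hrefl2]
      _ ≤ K * ∑ i ∈ range m, W u u' 1 (rr m c i) (aa m (i+1)) :=
          mul_le_mul_of_nonneg_left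
            (Finset.sum_le_sum fun i hi => hf7 i (Finset.mem_range.1 hi)) hK0
      _ ≤ K * (u 1 - ustar) := mul_le_mul_of_nonneg_left hchainG hK0
  have hsum_eq : ∑ i ∈ range m, W u u' (aa m (i+1)) (tt m i) (aa m (i+1))
      = ∑ i ∈ range m, W u u' (aa m (i+1)) (pp m c i) (qq m c i)
        + ∑ i ∈ range m, W u u' (aa m (i+1)) (rr m c i) (aa m (i+1)) := by
    rw [← Finset.sum_add_distrib]
    exact Finset.sum_congr rfl fun i hi => (hsplit i (Finset.mem_range.1 hi)).symm
  rw [hsum_eq]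
  exact add_le_add hSL hSR


end Stmt18

set_option maxHeartbeats 1000000 in
open Stmt18 in
/-- Midpoint-rule error bound for convex smooth functions: if `u` is convex and
differentiable on `[0,1]` with `M`-Lipschitz derivative, `u_*` its minimum over `[0,1]`,
and `t_i = (2i-1)/(2m)`, then
`|(u 1 - u 0) - (1/m) Σᵢ u'(tᵢ)| ≤ (1/(4m)) (√(2M(u 1 - u_*)) + √(2M(u 0 - u_*)))`. -/
theorem stmt18 (u u' : ℝ → ℝ) (M ustar : ℝ) (m : ℕ) (hm : 0 < m)
    (hconv : ConvexOn ℝ (Set.Icc 0 1) u)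
    (hderiv : ∀ t ∈ Set.Icc (0 : ℝ) 1, HasDerivWithinAt u (u' t) (Set.Icc 0 1) t)
    (hLip : ∀ t ∈ Set.Icc (0 : ℝ) 1, ∀ t' ∈ Set.Icc (0 : ℝ) 1,
      |u' t - u' t'| ≤ M * |t - t'|)
    (hmin : ∀ t ∈ Set.Icc (0 : ℝ) 1, ustar ≤ u t)
    (hattain : ∃ t ∈ Set.Icc (0 : ℝ) 1, u t = ustar) :
    |(u 1 - u 0) - (1 / m) * ∑ i ∈ Finset.range m, u' ((2 * (i : ℝ) + 1) / (2 * m))|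
      ≤ 1 / (4 * m) *
        (Real.sqrt (2 * M * (u 1 - ustar)) + Real.sqrt (2 * M * (u 0 - ustar))) := by
  have hm' : (0:ℝ) < m := by exact_mod_cast hm
  have hI0 : (0:ℝ) ∈ Set.Icc (0:ℝ) 1 := ⟨le_refl 0, zero_le_one⟩
  have hI1 : (1:ℝ) ∈ Set.Icc (0:ℝ) 1 := ⟨zero_le_one, le_refl 1⟩
  have hM : 0 ≤ M := by
    have h := hLip 0 hI0 1 hI1
    have h2 : |(0:ℝ) - 1| = 1 := by norm_num
    rw [h2, mul_one] at h
    exact le_trans (abs_nonneg _) h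
  have tang := Stmt18.tangent hconv hderiv
  have desc1 := Stmt18.descent1 hderiv hLip
  have desc2 := Stmt18.descent2 hderiv hLip
  -- choose the split point c
  obtain ⟨c, hcI, hcL, hcR⟩ : ∃ c ∈ Set.Icc (0:ℝ) 1,
      c * u' c ≤ u c - ustar ∧ -((1 - c) * u' c) ≤ u c - ustar := by
    rcases le_or_gt 0 (u' 0) with h0 | h0
    · refine ⟨0, hI0, ?_, ?_⟩
      · simpa using sub_nonneg.2 (hmin 0 hI0)
      · have h3 := sub_nonneg.2 (hmin 0 hI0)
        have : -((1 - (0:ℝ)) * u' 0) ≤ 0 := by simp [h0]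
        linarith
    · rcases le_or_gt (u' 1) 0 with h1 | h1
      · refine ⟨1, hI1, ?_, ?_⟩
        · have h3 := sub_nonneg.2 (hmin 1 hI1)
          nlinarith
        · have h3 := sub_nonneg.2 (hmin 1 hI1)
          have : -((1 - (1:ℝ)) * u' 1) = 0 := by ring
          linarith
      · have hcont : ContinuousOn u' (Set.Icc (0:ℝ) 1) := by
          have hL : LipschitzOnWith (Real.toNNReal M) u' (Set.Icc (0:ℝ) 1) := by
            apply LipschitzOnWith.of_dist_le_mul
            intro x hx y hy
            rw [Real.dist_eq, Real.dist_eq]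
            calc |u' x - u' y| ≤ M * |x - y| := hLip x hx y hy
              _ = (Real.toNNReal M) * |x - y| := by rw [Real.coe_toNNReal M hM]
          exact hL.continuousOn
        have hsub := intermediate_value_Icc zero_le_one hcont
        have h0m : (0:ℝ) ∈ Set.Icc (u' 0) (u' 1) := ⟨h0.le, h1.le⟩
        obtain ⟨c, hcI, hc⟩ := hsub h0m
        have h3 := sub_nonneg.2 (hmin c hcI)
        refine ⟨c, hcI, ?_, ?_⟩ <;> rw [hc] <;> simp [h3]
  have hrefl_mem : ∀ x : ℝ, x ∈ Set.Icc (0:ℝ) 1 → 1 - x ∈ Set.Icc (0:ℝ) 1 :=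
    fun x hx => ⟨by linarith [hx.2], by linarith [hx.1]⟩
  -- reflected data
  have tang_v : ∀ x ∈ Set.Icc (0:ℝ) 1, ∀ y ∈ Set.Icc (0:ℝ) 1,
      (fun s => u (1 - s)) x + (fun s => -u' (1 - s)) x * (y - x) ≤ (fun s => u (1 - s)) y := by
    intro x hx y hy
    simp only
    have h := tang (1-x) (hrefl_mem x hx) (1-y) (hrefl_mem y hy)
    nlinarith [h]
  have desc_v : ∀ x ∈ Set.Icc (0:ℝ) 1, ∀ y ∈ Set.Icc (0:ℝ) 1, x ≤ y →
      (fun s => u (1 - s)) y - (fun s => u (1 - s)) x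
        - (fun s => -u' (1 - s)) x * (y - x) ≤ M / 2 * (y - x)^2 := by
    intro x hx y hy hxy
    simp only
    have h := desc2 (1-y) (hrefl_mem y hy) (1-x) (hrefl_mem x hx) (by linarith)
    nlinarith [h]
  have hv0 : ustar ≤ (fun s => u (1 - s)) 0 := by norm_num; exact hmin 1 hI1
  have hv1 : ustar ≤ (fun s => u (1 - s)) 1 := by norm_num; exact hmin 0 hI0
  have hcIv : 1 - c ∈ Set.Icc (0:ℝ) 1 := hrefl_mem c hcI
  have hcc : (1:ℝ) - (1 - c) = c := by ring
  have hcLv : (1 - c) * (fun s => -u' (1 - s)) (1 - c) ≤ (fun s => u (1 - s)) (1 - c) - ustar := by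
    simp only
    rw [hcc]
    nlinarith [hcR]
  have hcRv : -((1 - (1 - c)) * (fun s => -u' (1 - s)) (1 - c))
      ≤ (fun s => u (1 - s)) (1 - c) - ustar := by
    simp only
    rw [hcc]
    nlinarith [hcL]
  -- apply the two halves
  have hA := Stmt18.half u u' M ustar c m hm tang desc1 (hmin 0 hI0) (hmin 1 hI1) hcI hcL hcR hM
  have hB := Stmt18.half (fun s => u (1 - s)) (fun s => -u' (1 - s)) M ustar (1 - c) m hm
    tang_v desc_v hv0 hv1 hcIv hcLv hcRv hM
  have hv0e : (fun s : ℝ => u (1 - s)) 0 = u 1 := by norm_num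
  have hv1e : (fun s : ℝ => u (1 - s)) 1 = u 0 := by norm_num
  simp only [sub_zero, sub_self] at hB
  -- arithmetic helpers
  have hcast : ∀ j, j < m → ((m - 1 - j : ℕ) : ℝ) = (m:ℝ) - 1 - (j:ℝ) := by
    intro j hj
    have h1 : m - 1 - j = m - (1 + j) := by omega
    rw [h1, Nat.cast_sub (by omega)]
    push_cast; ring
  have hmne : (m:ℝ) ≠ 0 := ne_of_gt hm'
  have hgap : ∀ i : ℕ, aa m (i+1) - tt m i = 1 / (2*(m:ℝ)) := by
    intro i
    unfold Stmt18.aa Stmt18.tt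
    push_cast
    field_simp
    ring
  have hgap2 : ∀ i : ℕ, tt m i - aa m i = 1 / (2*(m:ℝ)) := by
    intro i
    unfold Stmt18.aa Stmt18.tt
    field_simp
    ring
  have haI : ∀ i : ℕ, i ≤ m → aa m i ∈ Set.Icc (0:ℝ) 1 := by
    intro i hi
    constructor
    · unfold Stmt18.aa; positivity
    · unfold Stmt18.aa; rw [div_le_one hm']; exact_mod_cast hi
  have htI : ∀ i : ℕ, i < m → tt m i ∈ Set.Icc (0:ℝ) 1 := by
    intro i hi
    constructor
    · unfold Stmt18.tt; positivity
    · unfold Stmt18.tt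
      rw [div_le_one (by positivity)]
      have : (i:ℝ) + 1 ≤ m := by exact_mod_cast hi
      linarith
  have hpos2m : (0:ℝ) < 1/(2*(m:ℝ)) := by positivity
  have hta : ∀ i : ℕ, tt m i ≤ aa m (i+1) := fun i => by
    have := hgap i; linarith
  have hat : ∀ i : ℕ, aa m i ≤ tt m i := fun i => by
    have := hgap2 i; linarith
  -- relate the reflected sum to the B-sum of u
  have hBB : ∀ i, i < m → W (fun s => u (1 - s)) (fun s => -u' (1 - s))
      (aa m (i+1)) (tt m i) (aa m (i+1))
      = -W u u' (aa m (m-1-i)) (aa m (m-1-i)) (tt m (m-1-i)) := by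
    intro i hi
    have e1 : 1 - aa m (i+1) = aa m (m-1-i) := by
      unfold Stmt18.aa
      rw [hcast i hi]
      push_cast
      field_simp
      ring
    have e2 : 1 - tt m i = tt m (m-1-i) := by
      unfold Stmt18.tt
      rw [hcast i hi]
      push_cast
      field_simp
      ring
    unfold Stmt18.W
    simp only
    rw [e1, e2]
    have g3 : (aa m (i+1) - tt m i) * u' (tt m (m-1-i))
        = (1/(2*(m:ℝ))) * u' (tt m (m-1-i)) := by rw [hgap i]
    have g4 : (tt m (m-1-i) - aa m (m-1-i)) * u' (tt m (m-1-i))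
        = (1/(2*(m:ℝ))) * u' (tt m (m-1-i)) := by rw [hgap2 (m-1-i)]
    nlinarith [g3, g4]
  have hSB : ∑ i ∈ Finset.range m, W (fun s => u (1 - s)) (fun s => -u' (1 - s))
      (aa m (i+1)) (tt m i) (aa m (i+1))
      = ∑ j ∈ Finset.range m, -W u u' (aa m j) (aa m j) (tt m j) := by
    rw [← Finset.sum_range_reflect (fun j => -W u u' (aa m j) (aa m j) (tt m j)) m]
    exact Finset.sum_congr rfl fun i hi => hBB i (Finset.mem_range.1 hi)
  rw [hSB] at hB
  -- nonnegativity of both sums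
  have mono : ∀ x ∈ Set.Icc (0:ℝ) 1, ∀ y ∈ Set.Icc (0:ℝ) 1, x ≤ y → u' x ≤ u' y := by
    intro x hx y hy hxy
    rcases eq_or_lt_of_le hxy with rfl | h
    · exact le_rfl
    · nlinarith [tang x hx y hy, tang y hy x hx]
  have hSAnn : 0 ≤ ∑ i ∈ Finset.range m, W u u' (aa m (i+1)) (tt m i) (aa m (i+1)) := by
    apply Finset.sum_nonneg
    intro i hi
    have hi' := Finset.mem_range.1 hi
    exact W_nonneg (tang _ (htI i hi') _ (haI (i+1) hi'))
      (mul_nonneg (by linarith [hta i])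
        (by linarith [mono _ (htI i hi') _ (haI (i+1) hi') (hta i)]))
  have hSBnn : 0 ≤ ∑ j ∈ Finset.range m, -W u u' (aa m j) (aa m j) (tt m j) := by
    apply Finset.sum_nonneg
    intro j hj
    have hj' := Finset.mem_range.1 hj
    have := W_nonpos (u := u) (u' := u') (d := aa m j) (x := aa m j) (y := tt m j)
      (tang _ (htI j hj') _ (haI j hj'.le))
      (by rw [sub_self, zero_mul])
    linarith
  -- the error identity
  have ham : aa m m = 1 := by unfold Stmt18.aa; field_simp
  have ha0 : aa m 0 = 0 := by unfold Stmt18.aa; simp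
  have hEid : (u 1 - u 0) - (1/(m:ℝ)) * ∑ i ∈ Finset.range m, u' ((2*(i:ℝ)+1)/(2*(m:ℝ)))
      = (∑ i ∈ Finset.range m, W u u' (aa m (i+1)) (tt m i) (aa m (i+1)))
        - (∑ j ∈ Finset.range m, -W u u' (aa m j) (aa m j) (tt m j)) := by
    rw [← Finset.sum_sub_distrib]
    have hper : ∀ i ∈ Finset.range m,
        W u u' (aa m (i+1)) (tt m i) (aa m (i+1)) - (-W u u' (aa m i) (aa m i) (tt m i))
          = (u (aa m (i+1)) - u (aa m i)) - (1/(m:ℝ)) * u' (tt m i) := by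
      intro i hi
      have g3 : (aa m (i+1) - tt m i) * u' (tt m i)
          = (1/(2*(m:ℝ))) * u' (tt m i) := by rw [hgap i]
      have g4 : (tt m i - aa m i) * u' (tt m i)
          = (1/(2*(m:ℝ))) * u' (tt m i) := by rw [hgap2 i]
      have g5 : (1/(m:ℝ)) * u' (tt m i) = 2 * ((1/(2*(m:ℝ))) * u' (tt m i)) := by
        rw [show (1:ℝ)/(m:ℝ) = 2 * (1/(2*(m:ℝ))) by field_simp]
        ring
      unfold Stmt18.W
      linarith [g3, g4, g5]
    rw [Finset.sum_congr rfl hper, Finset.sum_sub_distrib, ← Finset.mul_sum,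
      Finset.sum_range_sub (fun i => u (aa m i)), ham, ha0]
    have htteq : ∀ i : ℕ, tt m i = (2*(i:ℝ)+1)/(2*(m:ℝ)) := fun i => rfl
    simp only [htteq]
  -- convert K-sqrt to target form
  have hconv0 : Real.sqrt (M/(8*(m:ℝ)^2) * (u 0 - ustar))
      = 1/(4*(m:ℝ)) * Real.sqrt (2*M*(u 0 - ustar)) := by
    have he : M/(8*(m:ℝ)^2) * (u 0 - ustar) = (1/(4*(m:ℝ)))^2 * (2*M*(u 0 - ustar)) := by
      rw [div_pow, one_pow]
      field_simp
      ring
    rw [he, Real.sqrt_mul (sq_nonneg _), Real.sqrt_sq (by positivity)]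
  have hconv1 : Real.sqrt (M/(8*(m:ℝ)^2) * (u 1 - ustar))
      = 1/(4*(m:ℝ)) * Real.sqrt (2*M*(u 1 - ustar)) := by
    have he : M/(8*(m:ℝ)^2) * (u 1 - ustar) = (1/(4*(m:ℝ)))^2 * (2*M*(u 1 - ustar)) := by
      rw [div_pow, one_pow]
      field_simp
      ring
    rw [he, Real.sqrt_mul (sq_nonneg _), Real.sqrt_sq (by positivity)]
  rw [hconv0, hconv1] at hA hB
  rw [abs_le]
  constructor
  · rw [hEid]
    linarith [hB, hSAnn]
  · rw [hEid]
    linarith [hA, hSBnn]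
end
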